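/- arXiv:2309.12093 — 6 statements merged into one kernel-verified Lean document; each statement's English description precedes it below -/
import Mathlib

section
/- Let M and M' be left module categories over a monoidal category V and let F : M → M' be a module functor. Then the following are equivalent: (i) F is an equivalence of module categories, i.e. there exist a module functor G : M' → M and module natural isomorphisms η : Id_M ≅ G∘F and ε : F∘G ≅ Id_{M'}; (ii) F is part of an adjoint equivalence of module categories (such G, η, ε additionally satisfying the zig-zag identities); (iii) the underlying functor of F is an equivalence of ordinary categories. -/
open CategoryTheory MonoidalCategory Category

universe v₁ v₂ v₃ v₄ u₁ u₂ u₃ u₄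

namespace ModMonPaper

/-! ### Strong monoidal functors as data plus property -/

section MonFunctor

variable (V : Type u₁) [Category.{v₁} V] [MonoidalCategory V]
variable (W : Type u₂) [Category.{v₂} W] [MonoidalCategory W]
variable (X : Type u₃) [Category.{v₃} X] [MonoidalCategory X]

/-- The data of a (strong) monoidal functor: a functor together with the
coherence isomorphisms `φ₂` and `φ₀`. -/
structure MonFunctorData where
  F : V ⥤ W
  φ₂ : ∀ x y : V, F.obj x ⊗ F.obj y ≅ F.obj (x ⊗ y)
  φ₀ : 𝟙_ W ≅ F.obj (𝟙_ V)

variable {V W X}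

/-- The axioms of a (strong) monoidal functor. -/
structure MonFunctorData.IsMonFunctor (D : MonFunctorData V W) : Prop where
  φ₂_natural : ∀ {x y x' y' : V} (f : x ⟶ x') (g : y ⟶ y'),
    (D.F.map f ⊗ₘ D.F.map g) ≫ (D.φ₂ x' y').hom = (D.φ₂ x y).hom ≫ D.F.map (f ⊗ₘ g)
  hexagon : ∀ x y z : V,
    ((D.φ₂ x y).hom ⊗ₘ 𝟙 (D.F.obj z)) ≫ (D.φ₂ (x ⊗ y) z).hom ≫ D.F.map (α_ x y z).hom =
      (α_ (D.F.obj x) (D.F.obj y) (D.F.obj z)).hom ≫ (𝟙 (D.F.obj x) ⊗ₘ (D.φ₂ y z).hom) ≫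
        (D.φ₂ x (y ⊗ z)).hom
  φ₀_left : ∀ x : V,
    (D.φ₀.hom ⊗ₘ 𝟙 (D.F.obj x)) ≫ (D.φ₂ (𝟙_ V) x).hom ≫ D.F.map (λ_ x).hom =
      (λ_ (D.F.obj x)).hom
  φ₀_right : ∀ x : V,
    (𝟙 (D.F.obj x) ⊗ₘ D.φ₀.hom) ≫ (D.φ₂ x (𝟙_ V)).hom ≫ D.F.map (ρ_ x).hom =
      (ρ_ (D.F.obj x)).hom

variable (V) in
/-- The identity monoidal functor data. -/
def MonFunctorData.id : MonFunctorData V V :=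
  ⟨𝟭 V, fun x y => Iso.refl (x ⊗ y), Iso.refl (𝟙_ V)⟩

/-- Composition of monoidal functor data. -/
def MonFunctorData.comp (D : MonFunctorData V W) (E : MonFunctorData W X) :
    MonFunctorData V X :=
  ⟨D.F ⋙ E.F, fun x y => E.φ₂ (D.F.obj x) (D.F.obj y) ≪≫ E.F.mapIso (D.φ₂ x y),
    E.φ₀ ≪≫ E.F.mapIso D.φ₀⟩

/-- A natural transformation between (strong) monoidal functors is monoidal if it is
compatible with `φ₂` and `φ₀`. -/
def IsMonNT (D E : MonFunctorData V W) (τ : D.F ⟶ E.F) : Prop :=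
  (∀ x y : V, (D.φ₂ x y).hom ≫ τ.app (x ⊗ y) = (τ.app x ⊗ₘ τ.app y) ≫ (E.φ₂ x y).hom) ∧
    D.φ₀.hom ≫ τ.app (𝟙_ V) = E.φ₀.hom

/-- A braided monoidal functor: a monoidal functor compatible with the braidings. -/
def MonFunctorData.IsBraidedFunctor [BraidedCategory V] [BraidedCategory W]
    (D : MonFunctorData V W) : Prop :=
  D.IsMonFunctor ∧
    ∀ x y : V, (D.φ₂ x y).hom ≫ D.F.map (β_ x y).hom =
      (β_ (D.F.obj x) (D.F.obj y)).hom ≫ (D.φ₂ y x).hom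

end MonFunctor

/-! ### Module categories -/

section ModuleCat

variable (V : Type u₁) [Category.{v₁} V] [MonoidalCategory V]
variable (M : Type u₂) [Category.{v₂} M]
variable (M' : Type u₃) [Category.{v₃} M']

/-- The data of a left `V`-module category structure on `M`. -/
structure ModuleData where
  act : V → M → M
  actMap : ∀ {v w : V} {x y : M}, (v ⟶ w) → (x ⟶ y) → (act v x ⟶ act w y)
  massoc : ∀ (v w : V) (x : M), act (v ⊗ w) x ≅ act v (act w x)
  munit : ∀ x : M, act (𝟙_ V) x ≅ x

variable {V M M'}

/-- The axioms of a left module category. -/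
structure ModuleData.IsModule (P : ModuleData V M) : Prop where
  actMap_id : ∀ (v : V) (x : M), P.actMap (𝟙 v) (𝟙 x) = 𝟙 (P.act v x)
  actMap_comp : ∀ {v w u : V} {x y z : M} (f : v ⟶ w) (g : w ⟶ u) (h : x ⟶ y) (k : y ⟶ z),
    P.actMap (f ≫ g) (h ≫ k) = P.actMap f h ≫ P.actMap g k
  massoc_natural : ∀ {v v' w w' : V} {x x' : M} (f : v ⟶ v') (g : w ⟶ w') (h : x ⟶ x'),
    P.actMap (f ⊗ₘ g) h ≫ (P.massoc v' w' x').hom =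
      (P.massoc v w x).hom ≫ P.actMap f (P.actMap g h)
  munit_natural : ∀ {x x' : M} (h : x ⟶ x'),
    P.actMap (𝟙 (𝟙_ V)) h ≫ (P.munit x').hom = (P.munit x).hom ≫ h
  pentagon : ∀ (u v w : V) (x : M),
    P.actMap (α_ u v w).hom (𝟙 x) ≫ (P.massoc u (v ⊗ w) x).hom ≫
        P.actMap (𝟙 u) (P.massoc v w x).hom =
      (P.massoc (u ⊗ v) w x).hom ≫ (P.massoc u v (P.act w x)).hom
  triangle : ∀ (v : V) (x : M),
    (P.massoc v (𝟙_ V) x).hom ≫ P.actMap (𝟙 v) (P.munit x).hom = P.actMap (ρ_ v).hom (𝟙 x)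

/-- Acting with a fixed object of `V` on an isomorphism of `M`. -/
def ModuleData.actIso (P : ModuleData V M)
    (hid : ∀ (v : V) (x : M), P.actMap (𝟙 v) (𝟙 x) = 𝟙 (P.act v x))
    (hcomp : ∀ {v w u : V} {x y z : M} (f : v ⟶ w) (g : w ⟶ u) (h : x ⟶ y) (k : y ⟶ z),
      P.actMap (f ≫ g) (h ≫ k) = P.actMap f h ≫ P.actMap g k)
    (v : V) {x y : M} (e : x ≅ y) : P.act v x ≅ P.act v y where
  hom := P.actMap (𝟙 v) e.hom
  inv := P.actMap (𝟙 v) e.inv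
  hom_inv_id := by rw [← hcomp]; simp [hid]
  inv_hom_id := by rw [← hcomp]; simp [hid]

/-- The data of a module functor. -/
structure ModuleFunctorData (P : ModuleData V M) (P' : ModuleData V M') where
  F : M ⥤ M'
  s : ∀ (v : V) (x : M), P'.act v (F.obj x) ≅ F.obj (P.act v x)

/-- The axioms of a module functor. -/
structure ModuleFunctorData.IsModuleFunctor {P : ModuleData V M} {P' : ModuleData V M'}
    (D : ModuleFunctorData P P') : Prop where
  s_natural : ∀ {v w : V} {x y : M} (f : v ⟶ w) (g : x ⟶ y),
    P'.actMap f (D.F.map g) ≫ (D.s w y).hom = (D.s v x).hom ≫ D.F.map (P.actMap f g)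
  pentagon : ∀ (v w : V) (x : M),
    (D.s (v ⊗ w) x).hom ≫ D.F.map (P.massoc v w x).hom =
      (P'.massoc v w (D.F.obj x)).hom ≫ P'.actMap (𝟙 v) (D.s w x).hom ≫
        (D.s v (P.act w x)).hom
  triangle : ∀ x : M,
    (D.s (𝟙_ V) x).hom ≫ D.F.map (P.munit x).hom = (P'.munit (D.F.obj x)).hom

/-- The identity module functor data. -/
def ModuleFunctorData.id (P : ModuleData V M) : ModuleFunctorData P P :=
  ⟨𝟭 M, fun v x => Iso.refl (P.act v x)⟩

/-- Composition of module functor data. -/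
def ModuleFunctorData.comp {M'' : Type u₄} [Category.{v₄} M''] {P : ModuleData V M}
    {P' : ModuleData V M'} {P'' : ModuleData V M''}
    (D : ModuleFunctorData P P') (E : ModuleFunctorData P' P'') :
    ModuleFunctorData P P'' :=
  ⟨D.F ⋙ E.F, fun v x => E.s v (D.F.obj x) ≪≫ E.F.mapIso (D.s v x)⟩

/-- Module natural transformations. -/
def IsModuleNT {P : ModuleData V M} {P' : ModuleData V M'}
    (D E : ModuleFunctorData P P') (τ : D.F ⟶ E.F) : Prop :=
  ∀ (v : V) (x : M),
    (D.s v x).hom ≫ τ.app (P.act v x) = P'.actMap (𝟙 v) (τ.app x) ≫ (E.s v x).hom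

end ModuleCat

end ModMonPaper
namespace ModMonPaper

section Stmt3

variable {V : Type u₁} [Category.{v₁} V] [MonoidalCategory V]
variable {M : Type u₂} [Category.{v₂} M]
variable {M' : Type u₃} [Category.{v₃} M']

/-- Auxiliary construction: if the underlying functor of a module functor is (part of)
an equivalence `e`, then we get an adjoint equivalence of module categories. -/
theorem aux_three_two {P : ModuleData V M} {P' : ModuleData V M'}
    (hP : P.IsModule) (hP' : P'.IsModule)
    (e : M ≌ M')
    (s : ∀ (v : V) (x : M), P'.act v (e.functor.obj x) ≅ e.functor.obj (P.act v x))
    (hs_nat : ∀ {v w : V} {x y : M} (f : v ⟶ w) (g : x ⟶ y),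
      P'.actMap f (e.functor.map g) ≫ (s w y).hom = (s v x).hom ≫ e.functor.map (P.actMap f g))
    (hs_pent : ∀ (v w : V) (x : M),
      (s (v ⊗ w) x).hom ≫ e.functor.map (P.massoc v w x).hom =
        (P'.massoc v w (e.functor.obj x)).hom ≫ P'.actMap (𝟙 v) (s w x).hom ≫
          (s v (P.act w x)).hom)
    (hs_tri : ∀ x : M, (s (𝟙_ V) x).hom ≫ e.functor.map (P.munit x).hom =
      (P'.munit (e.functor.obj x)).hom) :
    ∃ E : ModuleFunctorData P' P, E.IsModuleFunctor ∧
      ∃ (η : (ModuleFunctorData.id P).F ≅ ((ModuleFunctorData.mk e.functor s).comp E).F)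
        (ε : (E.comp (ModuleFunctorData.mk e.functor s)).F ≅ (ModuleFunctorData.id P').F),
        IsModuleNT (ModuleFunctorData.id P) ((ModuleFunctorData.mk e.functor s).comp E) η.hom ∧
          IsModuleNT (E.comp (ModuleFunctorData.mk e.functor s)) (ModuleFunctorData.id P')
            ε.hom ∧
          (∀ x : M, e.functor.map (η.hom.app x) ≫ ε.hom.app (e.functor.obj x) =
            𝟙 (e.functor.obj x)) ∧
          (∀ y : M', η.hom.app (E.F.obj y) ≫ E.F.map (ε.hom.app y) = 𝟙 (E.F.obj y)) := by
  -- composing actions of identities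
  have c' : ∀ (v : V) {x y z : M'} (a : x ⟶ y) (b : y ⟶ z),
      P'.actMap (𝟙 v) a ≫ P'.actMap (𝟙 v) b = P'.actMap (𝟙 v) (a ≫ b) := by
    intro v x y z a b
    have h := hP'.actMap_comp (𝟙 v) (𝟙 v) a b
    rw [Category.comp_id] at h
    exact h.symm
  have c2 : ∀ {v w : V} (f : v ⟶ w) {x y z : M'} (a : x ⟶ y) (b : y ⟶ z),
      P'.actMap f a ≫ P'.actMap (𝟙 w) b = P'.actMap f (a ≫ b) := by
    intro v w f x y z a b
    have h := hP'.actMap_comp f (𝟙 w) a b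
    rw [Category.comp_id] at h
    exact h.symm
  have c3 : ∀ {v w : V} (f : v ⟶ w) {x y z : M'} (a : x ⟶ y) (b : y ⟶ z),
      P'.actMap (𝟙 v) a ≫ P'.actMap f b = P'.actMap f (a ≫ b) := by
    intro v w f x y z a b
    have h := hP'.actMap_comp (𝟙 v) f a b
    rw [Category.id_comp] at h
    exact h.symm
  -- the inverse module functor structure
  let sE : ∀ (v : V) (y : M'), P.act v (e.inverse.obj y) ≅ e.inverse.obj (P'.act v y) :=
    fun v y => e.unitIso.app (P.act v (e.inverse.obj y)) ≪≫
      e.inverse.mapIso ((s v (e.inverse.obj y)).symm ≪≫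
        P'.actIso hP'.actMap_id hP'.actMap_comp v (e.counitIso.app y))
  have hsE : ∀ (v : V) (y : M'), (sE v y).hom =
      e.unitIso.hom.app (P.act v (e.inverse.obj y)) ≫
        e.inverse.map ((s v (e.inverse.obj y)).inv ≫
          P'.actMap (𝟙 v) (e.counitIso.hom.app y)) := fun v y => rfl
  have zig2 : ∀ y : M', e.unitIso.hom.app (e.inverse.obj y) ≫
      e.inverse.map (e.counitIso.hom.app y) = 𝟙 (e.inverse.obj y) := fun y =>
    e.unit_inverse_comp y
  have hnatinv : ∀ {v w : V} {x y : M} (f : v ⟶ w) (g : x ⟶ y),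
      e.functor.map (P.actMap f g) ≫ (s w y).inv =
        (s v x).inv ≫ P'.actMap f (e.functor.map g) := by
    intro v w x y f g
    rw [Iso.comp_inv_eq, Category.assoc, hs_nat f g, Iso.inv_hom_id_assoc]
  -- the key computation
  have K : ∀ (v : V) (y : M'),
      e.functor.map ((sE v y).hom) ≫ e.counitIso.hom.app (P'.act v y) =
        (s v (e.inverse.obj y)).inv ≫ P'.actMap (𝟙 v) (e.counitIso.hom.app y) := by
    intro v y
    rw [hsE, Functor.map_comp, Category.assoc, ← Functor.comp_map e.inverse e.functor]
    erw [e.counitIso.hom.naturality]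
    rw [Functor.id_map, ← Category.assoc, e.functor_unitIso_comp, Category.id_comp]
  -- naturality of the inverse module structure
  have hEnat : ∀ {v w : V} {x y : M'} (f : v ⟶ w) (g : x ⟶ y),
      P.actMap f (e.inverse.map g) ≫ (sE w y).hom =
        (sE v x).hom ≫ e.inverse.map (P'.actMap f g) := by
    intro v w x y f g
    have hb : e.functor.map (P.actMap f (e.inverse.map g)) ≫
          (s w (e.inverse.obj y)).inv ≫ P'.actMap (𝟙 w) (e.counitIso.hom.app y) =
        (s v (e.inverse.obj x)).inv ≫ P'.actMap (𝟙 v) (e.counitIso.hom.app x) ≫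
          P'.actMap f g := by
      rw [← Category.assoc, hnatinv f (e.inverse.map g), Category.assoc, c2,
        ← Functor.comp_map e.inverse e.functor, e.counitIso.hom.naturality, Functor.id_map,
        ← c3]
    have n1 : P.actMap f (e.inverse.map g) ≫
          e.unitIso.hom.app (P.act w (e.inverse.obj y)) =
        e.unitIso.hom.app (P.act v (e.inverse.obj x)) ≫
          e.inverse.map (e.functor.map (P.actMap f (e.inverse.map g))) := by
      simpa using e.unitIso.hom.naturality (P.actMap f (e.inverse.map g))
    rw [hsE, hsE, ← Category.assoc, n1]
    simp only [Category.assoc, ← Functor.map_comp]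
    rw [hb]
  -- pentagon for the inverse module structure
  have hEpent : ∀ (v w : V) (y : M'),
      (sE (v ⊗ w) y).hom ≫ e.inverse.map (P'.massoc v w y).hom =
        (P.massoc v w (e.inverse.obj y)).hom ≫ P.actMap (𝟙 v) (sE w y).hom ≫
          (sE v (P'.act w y)).hom := by
    intro v w y
    have hten : (𝟙 (v ⊗ w) : (v ⊗ w) ⟶ (v ⊗ w)) = 𝟙 v ⊗ₘ 𝟙 w :=
      (MonoidalCategory.id_tensorHom_id v w).symm
    have st1 : P'.actMap (𝟙 (v ⊗ w)) (e.counitIso.hom.app y) ≫ (P'.massoc v w y).hom =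
        (P'.massoc v w (e.functor.obj (e.inverse.obj y))).hom ≫
          P'.actMap (𝟙 v) (P'.actMap (𝟙 w) (e.counitIso.hom.app y)) := by
      rw [hten]
      exact hP'.massoc_natural (𝟙 v) (𝟙 w) (e.counitIso.hom.app y)
    have st2 : (s (v ⊗ w) (e.inverse.obj y)).inv ≫
          (P'.massoc v w (e.functor.obj (e.inverse.obj y))).hom =
        e.functor.map (P.massoc v w (e.inverse.obj y)).hom ≫
          (s v (P.act w (e.inverse.obj y))).inv ≫
            P'.actMap (𝟙 v) (s w (e.inverse.obj y)).inv := by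
      rw [Iso.inv_comp_eq, reassoc_of% (hs_pent v w (e.inverse.obj y)),
        Iso.hom_inv_id_assoc, c', Iso.hom_inv_id, hP'.actMap_id, Category.comp_id]
    have n2 : (P.massoc v w (e.inverse.obj y)).hom ≫
          e.unitIso.hom.app (P.act v (P.act w (e.inverse.obj y))) =
        e.unitIso.hom.app (P.act (v ⊗ w) (e.inverse.obj y)) ≫
          e.inverse.map (e.functor.map (P.massoc v w (e.inverse.obj y)).hom) := by
      simpa using e.unitIso.hom.naturality (P.massoc v w (e.inverse.obj y)).hom
    have n3 : P.actMap (𝟙 v) (sE w y).hom ≫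
          e.unitIso.hom.app (P.act v (e.inverse.obj (P'.act w y))) =
        e.unitIso.hom.app (P.act v (P.act w (e.inverse.obj y))) ≫
          e.inverse.map (e.functor.map (P.actMap (𝟙 v) (sE w y).hom)) := by
      simpa using e.unitIso.hom.naturality (P.actMap (𝟙 v) (sE w y).hom)
    have hL : (sE (v ⊗ w) y).hom ≫ e.inverse.map (P'.massoc v w y).hom =
        (P.massoc v w (e.inverse.obj y)).hom ≫
          e.unitIso.hom.app (P.act v (P.act w (e.inverse.obj y))) ≫
            e.inverse.map ((s v (P.act w (e.inverse.obj y))).inv ≫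
              P'.actMap (𝟙 v) ((s w (e.inverse.obj y)).inv ≫
                P'.actMap (𝟙 w) (e.counitIso.hom.app y))) := by
      rw [hsE]
      simp only [Category.assoc, ← Functor.map_comp]
      rw [st1, reassoc_of% st2, c']
      rw [Functor.map_comp, ← reassoc_of% n2]
    have hR : (P.massoc v w (e.inverse.obj y)).hom ≫ P.actMap (𝟙 v) (sE w y).hom ≫
          (sE v (P'.act w y)).hom =
        (P.massoc v w (e.inverse.obj y)).hom ≫
          e.unitIso.hom.app (P.act v (P.act w (e.inverse.obj y))) ≫
            e.inverse.map ((s v (P.act w (e.inverse.obj y))).inv ≫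
              P'.actMap (𝟙 v) ((s w (e.inverse.obj y)).inv ≫
                P'.actMap (𝟙 w) (e.counitIso.hom.app y))) := by
      rw [hsE v (P'.act w y), reassoc_of% n3]
      simp only [Category.assoc, ← Functor.map_comp]
      rw [reassoc_of% (hnatinv (𝟙 v) ((sE w y).hom)), c', K w y]
    rw [hL, hR]
  -- triangle for the inverse module structure
  have hEtri : ∀ y : M', (sE (𝟙_ V) y).hom ≫ e.inverse.map (P'.munit y).hom =
      (P.munit (e.inverse.obj y)).hom := by
    intro y
    have st : P'.actMap (𝟙 (𝟙_ V)) (e.counitIso.hom.app y) ≫ (P'.munit y).hom =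
        (P'.munit (e.functor.obj (e.inverse.obj y))).hom ≫ e.counitIso.hom.app y :=
      hP'.munit_natural (e.counitIso.hom.app y)
    have st' : (s (𝟙_ V) (e.inverse.obj y)).inv ≫
          (P'.munit (e.functor.obj (e.inverse.obj y))).hom =
        e.functor.map (P.munit (e.inverse.obj y)).hom := by
      rw [← hs_tri (e.inverse.obj y), Iso.inv_hom_id_assoc]
    have n4 : (P.munit (e.inverse.obj y)).hom ≫ e.unitIso.hom.app (e.inverse.obj y) =
        e.unitIso.hom.app (P.act (𝟙_ V) (e.inverse.obj y)) ≫
          e.inverse.map (e.functor.map (P.munit (e.inverse.obj y)).hom) := by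
      simpa using e.unitIso.hom.naturality (P.munit (e.inverse.obj y)).hom
    rw [hsE]
    simp only [Category.assoc, ← Functor.map_comp]
    rw [st, reassoc_of% st', Functor.map_comp, ← reassoc_of% n4, zig2, Category.comp_id]
  -- the module natural transformation conditions
  have hηNT : IsModuleNT (ModuleFunctorData.id P)
      ((ModuleFunctorData.mk e.functor s).comp ⟨e.inverse, sE⟩) e.unitIso.hom := by
    intro v x
    show 𝟙 (P.act v x) ≫ e.unitIso.hom.app (P.act v x) =
      P.actMap (𝟙 v) (e.unitIso.hom.app x) ≫ (sE v (e.functor.obj x)).hom ≫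
        e.inverse.map (s v x).hom
    have n5 : P.actMap (𝟙 v) (e.unitIso.hom.app x) ≫
          e.unitIso.hom.app (P.act v (e.inverse.obj (e.functor.obj x))) =
        e.unitIso.hom.app (P.act v x) ≫
          e.inverse.map (e.functor.map (P.actMap (𝟙 v) (e.unitIso.hom.app x))) := by
      simpa using e.unitIso.hom.naturality (P.actMap (𝟙 v) (e.unitIso.hom.app x))
    rw [Category.id_comp, hsE, ← Category.assoc, ← Category.assoc, Category.assoc, n5]
    simp only [Category.assoc, ← Functor.map_comp]
    rw [reassoc_of% (hnatinv (𝟙 v) (e.unitIso.hom.app x)),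
      reassoc_of% (c' v (e.functor.map (e.unitIso.hom.app x))
        (e.counitIso.hom.app (e.functor.obj x))),
      e.functor_unitIso_comp, hP'.actMap_id, Category.id_comp, Iso.inv_hom_id,
      CategoryTheory.Functor.map_id]
    exact (Category.comp_id _).symm
  have hεNT : IsModuleNT ((ModuleFunctorData.mk (P := P') e.inverse sE).comp
      (ModuleFunctorData.mk e.functor s)) (ModuleFunctorData.id P') e.counitIso.hom := by
    intro v y
    show ((s v (e.inverse.obj y)).hom ≫ e.functor.map ((sE v y).hom)) ≫
        e.counitIso.hom.app (P'.act v y) =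
      P'.actMap (𝟙 v) (e.counitIso.hom.app y) ≫ 𝟙 (P'.act v y)
    rw [Category.assoc, K v y, Iso.hom_inv_id_assoc]
    exact (Category.comp_id _).symm
  exact ⟨⟨e.inverse, sE⟩,
    ⟨fun f g => hEnat f g, hEpent, hEtri⟩,
    e.unitIso, e.counitIso, hηNT, hεNT,
    fun x => e.functor_unitIso_comp x, fun y => e.unit_inverse_comp y⟩

/-- For a module functor `F : M ⟶ M'` between left module categories
over `V` the following are equivalent: (i) `F` is an equivalence of module categories;
(ii) `F` is part of an adjoint equivalence of module categories; (iii) the underlying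
functor of `F` is an equivalence of ordinary categories. -/
theorem module_functor_equivalence_tfae {P : ModuleData V M} {P' : ModuleData V M'}
    (hP : P.IsModule) (hP' : P'.IsModule)
    (D : ModuleFunctorData P P') (hD : D.IsModuleFunctor) :
    List.TFAE [
      (∃ E : ModuleFunctorData P' P, E.IsModuleFunctor ∧
        ∃ (η : (ModuleFunctorData.id P).F ≅ (D.comp E).F)
          (ε : (E.comp D).F ≅ (ModuleFunctorData.id P').F),
          IsModuleNT (ModuleFunctorData.id P) (D.comp E) η.hom ∧
            IsModuleNT (E.comp D) (ModuleFunctorData.id P') ε.hom),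
      (∃ E : ModuleFunctorData P' P, E.IsModuleFunctor ∧
        ∃ (η : (ModuleFunctorData.id P).F ≅ (D.comp E).F)
          (ε : (E.comp D).F ≅ (ModuleFunctorData.id P').F),
          IsModuleNT (ModuleFunctorData.id P) (D.comp E) η.hom ∧
            IsModuleNT (E.comp D) (ModuleFunctorData.id P') ε.hom ∧
            (∀ x : M, D.F.map (η.hom.app x) ≫ ε.hom.app (D.F.obj x) = 𝟙 (D.F.obj x)) ∧
            (∀ y : M', η.hom.app (E.F.obj y) ≫ E.F.map (ε.hom.app y) = 𝟙 (E.F.obj y))),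
      D.F.IsEquivalence] := by
  tfae_have 2 → 1
  | ⟨E, hE, η, ε, h1, h2, _, _⟩ => ⟨E, hE, η, ε, h1, h2⟩
  tfae_have 1 → 3
  | ⟨E, _, η, ε, _, _⟩ => (CategoryTheory.Equivalence.mk D.F E.F η ε).isEquivalence_functor
  tfae_have 3 → 2
  | h3 => by
    haveI := h3
    exact aux_three_two hP hP' D.F.asEquivalence D.s
      (fun f g => hD.s_natural f g) hD.pentagon hD.triangle
  tfae_finish

end Stmt3

end ModMonPaper
end

section
/- Let M be a non-unital module monoidal category over a braided monoidal category V. Then for all m, n ∈ M the two triangles (α¹&l^▷) l^▷_{m⊗n} ∘ α¹_{1_V,m,n} = l^▷_m ⊗ id_n and (α²&l^▷) l^▷_{m⊗n} ∘ α²_{1_V,m,n} = id_m ⊗ l^▷_n commute. -/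
open CategoryTheory MonoidalCategory Category

universe v₁ v₂ v₃ v₄ u₁ u₂ u₃ u₄

/-! ### Non-unital module monoidal categories -/

namespace ModMonPaper

section NU

variable (V : Type u₁) [Category.{v₁} V] [MonoidalCategory V]
variable (M : Type u₂) [Category.{v₂} M]
variable (M' : Type u₃) [Category.{v₃} M']

/-- The data of a (possibly non-unital) monoidal structure on `M`. -/
structure NUMonData where
  tensor : M → M → M
  tmap : ∀ {x x' y y' : M}, (x ⟶ x') → (y ⟶ y') → (tensor x y ⟶ tensor x' y')
  assoc : ∀ x y z : M, tensor (tensor x y) z ≅ tensor x (tensor y z)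

variable {M M'}

/-- The axioms of a non-unital monoidal category. -/
structure NUMonData.IsNUMon (Q : NUMonData M) : Prop where
  tmap_id : ∀ x y : M, Q.tmap (𝟙 x) (𝟙 y) = 𝟙 (Q.tensor x y)
  tmap_comp : ∀ {x x' x'' y y' y'' : M} (f : x ⟶ x') (f' : x' ⟶ x'')
    (g : y ⟶ y') (g' : y' ⟶ y''),
    Q.tmap (f ≫ f') (g ≫ g') = Q.tmap f g ≫ Q.tmap f' g'
  assoc_natural : ∀ {x x' y y' z z' : M} (f : x ⟶ x') (g : y ⟶ y') (h : z ⟶ z'),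
    Q.tmap (Q.tmap f g) h ≫ (Q.assoc x' y' z').hom =
      (Q.assoc x y z).hom ≫ Q.tmap f (Q.tmap g h)
  pentagon : ∀ u v w x : M,
    Q.tmap (Q.assoc u v w).hom (𝟙 x) ≫ (Q.assoc u (Q.tensor v w) x).hom ≫
        Q.tmap (𝟙 u) (Q.assoc v w x).hom =
      (Q.assoc (Q.tensor u v) w x).hom ≫ (Q.assoc u v (Q.tensor w x)).hom

/-- Tensoring two isomorphisms in a non-unital monoidal category. -/
def NUMonData.tmapIso (Q : NUMonData M)
    (hid : ∀ x y : M, Q.tmap (𝟙 x) (𝟙 y) = 𝟙 (Q.tensor x y))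
    (hcomp : ∀ {x x' x'' y y' y'' : M} (f : x ⟶ x') (f' : x' ⟶ x'')
      (g : y ⟶ y') (g' : y' ⟶ y''),
      Q.tmap (f ≫ f') (g ≫ g') = Q.tmap f g ≫ Q.tmap f' g')
    {x x' y y' : M} (e : x ≅ x') (f : y ≅ y') : Q.tensor x y ≅ Q.tensor x' y' where
  hom := Q.tmap e.hom f.hom
  inv := Q.tmap e.inv f.inv
  hom_inv_id := by rw [← hcomp]; simp [hid]
  inv_hom_id := by rw [← hcomp]; simp [hid]

variable (M) in
/-- The data of a non-unital module monoidal category over `V`. -/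
structure NUModMonData where
  tens : NUMonData M
  mod : ModuleData V M
  α₁ : ∀ (v : V) (x y : M), tens.tensor (mod.act v x) y ≅ mod.act v (tens.tensor x y)
  α₂ : ∀ (v : V) (x y : M), tens.tensor x (mod.act v y) ≅ mod.act v (tens.tensor x y)

variable {V}

/-- The axioms of a non-unital module monoidal category over a braided category `V`. -/
structure NUModMonData.IsNUModMon [BraidedCategory V] (P : NUModMonData V M) : Prop where
  tens : P.tens.IsNUMon
  mod : P.mod.IsModule
  α₁_natural : ∀ {v v' : V} {x x' y y' : M} (f : v ⟶ v') (g : x ⟶ x') (h : y ⟶ y'),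
    P.tens.tmap (P.mod.actMap f g) h ≫ (P.α₁ v' x' y').hom =
      (P.α₁ v x y).hom ≫ P.mod.actMap f (P.tens.tmap g h)
  α₂_natural : ∀ {v v' : V} {x x' y y' : M} (f : v ⟶ v') (g : x ⟶ x') (h : y ⟶ y'),
    P.tens.tmap g (P.mod.actMap f h) ≫ (P.α₂ v' x' y').hom =
      (P.α₂ v x y).hom ≫ P.mod.actMap f (P.tens.tmap g h)
  α₁_assoc : ∀ (v : V) (l m n : M),
    P.tens.tmap (P.α₁ v l m).hom (𝟙 n) ≫ (P.α₁ v (P.tens.tensor l m) n).hom ≫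
        P.mod.actMap (𝟙 v) (P.tens.assoc l m n).hom =
      (P.tens.assoc (P.mod.act v l) m n).hom ≫ (P.α₁ v l (P.tens.tensor m n)).hom
  α₁_massoc : ∀ (v w : V) (m n : M),
    P.tens.tmap (P.mod.massoc v w m).hom (𝟙 n) ≫ (P.α₁ v (P.mod.act w m) n).hom ≫
        P.mod.actMap (𝟙 v) (P.α₁ w m n).hom =
      (P.α₁ (v ⊗ w) m n).hom ≫ (P.mod.massoc v w (P.tens.tensor m n)).hom
  α₂_assoc : ∀ (v : V) (l m n : M),
    (P.tens.assoc l m (P.mod.act v n)).hom ≫ P.tens.tmap (𝟙 l) (P.α₂ v m n).hom ≫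
        (P.α₂ v l (P.tens.tensor m n)).hom =
      (P.α₂ v (P.tens.tensor l m) n).hom ≫ P.mod.actMap (𝟙 v) (P.tens.assoc l m n).hom
  α₂_massoc : ∀ (v w : V) (m n : M),
    P.tens.tmap (𝟙 m) (P.mod.massoc v w n).hom ≫ (P.α₂ v m (P.mod.act w n)).hom ≫
        P.mod.actMap (𝟙 v) (P.α₂ w m n).hom =
      (P.α₂ (v ⊗ w) m n).hom ≫ (P.mod.massoc v w (P.tens.tensor m n)).hom
  α₁_α₂ : ∀ (v : V) (l m n : M),
    P.tens.tmap (P.α₂ v l m).hom (𝟙 n) ≫ (P.α₁ v (P.tens.tensor l m) n).hom ≫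
        P.mod.actMap (𝟙 v) (P.tens.assoc l m n).hom =
      (P.tens.assoc l (P.mod.act v m) n).hom ≫ P.tens.tmap (𝟙 l) (P.α₁ v m n).hom ≫
        (P.α₂ v l (P.tens.tensor m n)).hom
  braiding_act : ∀ (v w : V) (m n : M),
    (P.α₂ v (P.mod.act w m) n).hom ≫ P.mod.actMap (𝟙 v) (P.α₁ w m n).hom ≫
        (P.mod.massoc v w (P.tens.tensor m n)).inv ≫
          P.mod.actMap (β_ v w).hom (𝟙 (P.tens.tensor m n)) =
      (P.α₁ w m (P.mod.act v n)).hom ≫ P.mod.actMap (𝟙 w) (P.α₂ v m n).hom ≫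
        (P.mod.massoc w v (P.tens.tensor m n)).inv

/-- The data of a non-unital module monoidal functor. -/
structure NUMMFunctorData (P : NUModMonData V M) (P' : NUModMonData V M') where
  F : M ⥤ M'
  φ₂ : ∀ x y : M, P'.tens.tensor (F.obj x) (F.obj y) ≅ F.obj (P.tens.tensor x y)
  s : ∀ (v : V) (x : M), P'.mod.act v (F.obj x) ≅ F.obj (P.mod.act v x)

/-- The axioms of a non-unital module monoidal functor. -/
structure NUMMFunctorData.IsNUMMFunctor {P : NUModMonData V M} {P' : NUModMonData V M'}
    (D : NUMMFunctorData P P') : Prop where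
  φ₂_natural : ∀ {x x' y y' : M} (f : x ⟶ x') (g : y ⟶ y'),
    P'.tens.tmap (D.F.map f) (D.F.map g) ≫ (D.φ₂ x' y').hom =
      (D.φ₂ x y).hom ≫ D.F.map (P.tens.tmap f g)
  hexagon : ∀ x y z : M,
    P'.tens.tmap (D.φ₂ x y).hom (𝟙 (D.F.obj z)) ≫ (D.φ₂ (P.tens.tensor x y) z).hom ≫
        D.F.map (P.tens.assoc x y z).hom =
      (P'.tens.assoc (D.F.obj x) (D.F.obj y) (D.F.obj z)).hom ≫
        P'.tens.tmap (𝟙 (D.F.obj x)) (D.φ₂ y z).hom ≫ (D.φ₂ x (P.tens.tensor y z)).hom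
  s_natural : ∀ {v w : V} {x y : M} (f : v ⟶ w) (g : x ⟶ y),
    P'.mod.actMap f (D.F.map g) ≫ (D.s w y).hom = (D.s v x).hom ≫ D.F.map (P.mod.actMap f g)
  s_pentagon : ∀ (v w : V) (x : M),
    (D.s (v ⊗ w) x).hom ≫ D.F.map (P.mod.massoc v w x).hom =
      (P'.mod.massoc v w (D.F.obj x)).hom ≫ P'.mod.actMap (𝟙 v) (D.s w x).hom ≫
        (D.s v (P.mod.act w x)).hom
  s_triangle : ∀ x : M,
    (D.s (𝟙_ V) x).hom ≫ D.F.map (P.mod.munit x).hom = (P'.mod.munit (D.F.obj x)).hom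
  compα₁ : ∀ (v : V) (x y : M),
    (P'.α₁ v (D.F.obj x) (D.F.obj y)).hom ≫ P'.mod.actMap (𝟙 v) (D.φ₂ x y).hom ≫
        (D.s v (P.tens.tensor x y)).hom =
      P'.tens.tmap (D.s v x).hom (𝟙 (D.F.obj y)) ≫ (D.φ₂ (P.mod.act v x) y).hom ≫
        D.F.map (P.α₁ v x y).hom
  compα₂ : ∀ (v : V) (x y : M),
    (P'.α₂ v (D.F.obj x) (D.F.obj y)).hom ≫ P'.mod.actMap (𝟙 v) (D.φ₂ x y).hom ≫
        (D.s v (P.tens.tensor x y)).hom =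
      P'.tens.tmap (𝟙 (D.F.obj x)) (D.s v y).hom ≫ (D.φ₂ x (P.mod.act v y)).hom ≫
        D.F.map (P.α₂ v x y).hom

/-- The identity non-unital module monoidal functor data. -/
def NUMMFunctorData.id (P : NUModMonData V M) : NUMMFunctorData P P :=
  ⟨𝟭 M, fun x y => Iso.refl (P.tens.tensor x y), fun v x => Iso.refl (P.mod.act v x)⟩

/-- Composition of non-unital module monoidal functor data. -/
def NUMMFunctorData.comp {M'' : Type u₄} [Category.{v₄} M''] {P : NUModMonData V M}
    {P' : NUModMonData V M'} {P'' : NUModMonData V M''}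
    (D : NUMMFunctorData P P') (E : NUMMFunctorData P' P'') : NUMMFunctorData P P'' :=
  ⟨D.F ⋙ E.F,
    fun x y => E.φ₂ (D.F.obj x) (D.F.obj y) ≪≫ E.F.mapIso (D.φ₂ x y),
    fun v x => E.s v (D.F.obj x) ≪≫ E.F.mapIso (D.s v x)⟩

/-- Non-unital module monoidal natural transformations. -/
def IsNUMMNT {P : NUModMonData V M} {P' : NUModMonData V M'}
    (D E : NUMMFunctorData P P') (τ : D.F ⟶ E.F) : Prop :=
  (∀ x y : M, (D.φ₂ x y).hom ≫ τ.app (P.tens.tensor x y) =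
      P'.tens.tmap (τ.app x) (τ.app y) ≫ (E.φ₂ x y).hom) ∧
    ∀ (v : V) (x : M), (D.s v x).hom ≫ τ.app (P.mod.act v x) =
      P'.mod.actMap (𝟙 v) (τ.app x) ≫ (E.s v x).hom

end NU

end ModMonPaper
namespace ModMonPaper

section Stmt4

variable {V : Type u₁} [Category.{v₁} V] [MonoidalCategory V] [BraidedCategory V]
variable {M : Type u₂} [Category.{v₂} M]

/-- In any non-unital module monoidal category the two triangles
`(α¹ & l^▷)` and `(α² & l^▷)` commute. -/
theorem nuModMon_alpha_munit_triangles (P : NUModMonData V M) (hP : P.IsNUModMon)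
    (x y : M) :
    (P.α₁ (𝟙_ V) x y).hom ≫ (P.mod.munit (P.tens.tensor x y)).hom =
        P.tens.tmap (P.mod.munit x).hom (𝟙 y) ∧
      (P.α₂ (𝟙_ V) x y).hom ≫ (P.mod.munit (P.tens.tensor x y)).hom =
        P.tens.tmap (𝟙 x) (P.mod.munit y).hom := by
  have hT := hP.tens
  have hM := hP.mod
  -- the unit action is faithful
  have faith : ∀ {a b : M} (f g : a ⟶ b),
      P.mod.actMap (𝟙 (𝟙_ V)) f = P.mod.actMap (𝟙 (𝟙_ V)) g → f = g := by
    intro a b f g h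
    apply (cancel_epi (P.mod.munit a).hom).mp
    rw [← hM.munit_natural f, ← hM.munit_natural g, h]
  have actMap_comp' : ∀ {a b c : M} (p : a ⟶ b) (q : b ⟶ c),
      P.mod.actMap (𝟙 (𝟙_ V)) (p ≫ q) =
        P.mod.actMap (𝟙 (𝟙_ V)) p ≫ P.mod.actMap (𝟙 (𝟙_ V)) q := by
    intro a b c p q
    simpa using hM.actMap_comp (𝟙 _) (𝟙 _) p q
  constructor
  · apply faith
    apply (cancel_epi (P.α₁ (𝟙_ V) (P.mod.act (𝟙_ V) x) y).hom).mp
    apply (cancel_epi (P.tens.tmapIso hT.tmap_id hT.tmap_comp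
        (P.mod.massoc (𝟙_ V) (𝟙_ V) x) (Iso.refl y)).hom).mp
    have hA : (P.tens.tmapIso hT.tmap_id hT.tmap_comp
        (P.mod.massoc (𝟙_ V) (𝟙_ V) x) (Iso.refl y)).hom =
        P.tens.tmap (P.mod.massoc (𝟙_ V) (𝟙_ V) x).hom (𝟙 y) := rfl
    rw [hA]
    calc P.tens.tmap (P.mod.massoc (𝟙_ V) (𝟙_ V) x).hom (𝟙 y) ≫
          (P.α₁ (𝟙_ V) (P.mod.act (𝟙_ V) x) y).hom ≫
          P.mod.actMap (𝟙 (𝟙_ V))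
            ((P.α₁ (𝟙_ V) x y).hom ≫ (P.mod.munit (P.tens.tensor x y)).hom)
        = (P.tens.tmap (P.mod.massoc (𝟙_ V) (𝟙_ V) x).hom (𝟙 y) ≫
            (P.α₁ (𝟙_ V) (P.mod.act (𝟙_ V) x) y).hom ≫
            P.mod.actMap (𝟙 (𝟙_ V)) (P.α₁ (𝟙_ V) x y).hom) ≫
            P.mod.actMap (𝟙 (𝟙_ V)) (P.mod.munit (P.tens.tensor x y)).hom := by
          rw [actMap_comp']; simp only [assoc]
      _ = (P.α₁ (𝟙_ V ⊗ 𝟙_ V) x y).hom ≫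
            (P.mod.massoc (𝟙_ V) (𝟙_ V) (P.tens.tensor x y)).hom ≫
            P.mod.actMap (𝟙 (𝟙_ V)) (P.mod.munit (P.tens.tensor x y)).hom := by
          rw [hP.α₁_massoc]; simp only [assoc]
      _ = (P.α₁ (𝟙_ V ⊗ 𝟙_ V) x y).hom ≫
            P.mod.actMap (ρ_ (𝟙_ V)).hom (𝟙 (P.tens.tensor x y)) := by
          rw [hM.triangle]
      _ = (P.α₁ (𝟙_ V ⊗ 𝟙_ V) x y).hom ≫
            P.mod.actMap (ρ_ (𝟙_ V)).hom (P.tens.tmap (𝟙 x) (𝟙 y)) := by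
          rw [hT.tmap_id]
      _ = P.tens.tmap (P.mod.actMap (ρ_ (𝟙_ V)).hom (𝟙 x)) (𝟙 y) ≫
            (P.α₁ (𝟙_ V) x y).hom := by
          rw [hP.α₁_natural (ρ_ (𝟙_ V)).hom (𝟙 x) (𝟙 y)]
      _ = P.tens.tmap ((P.mod.massoc (𝟙_ V) (𝟙_ V) x).hom ≫
            P.mod.actMap (𝟙 (𝟙_ V)) (P.mod.munit x).hom) (𝟙 y) ≫
            (P.α₁ (𝟙_ V) x y).hom := by
          rw [hM.triangle]
      _ = P.tens.tmap (P.mod.massoc (𝟙_ V) (𝟙_ V) x).hom (𝟙 y) ≫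
            P.tens.tmap (P.mod.actMap (𝟙 (𝟙_ V)) (P.mod.munit x).hom) (𝟙 y) ≫
            (P.α₁ (𝟙_ V) x y).hom := by
          rw [← assoc, ← hT.tmap_comp]; simp
      _ = P.tens.tmap (P.mod.massoc (𝟙_ V) (𝟙_ V) x).hom (𝟙 y) ≫
            (P.α₁ (𝟙_ V) (P.mod.act (𝟙_ V) x) y).hom ≫
            P.mod.actMap (𝟙 (𝟙_ V)) (P.tens.tmap (P.mod.munit x).hom (𝟙 y)) := by
          rw [hP.α₁_natural (𝟙 (𝟙_ V)) (P.mod.munit x).hom (𝟙 y)]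
  · apply faith
    apply (cancel_epi (P.α₂ (𝟙_ V) x (P.mod.act (𝟙_ V) y)).hom).mp
    apply (cancel_epi (P.tens.tmapIso hT.tmap_id hT.tmap_comp
        (Iso.refl x) (P.mod.massoc (𝟙_ V) (𝟙_ V) y)).hom).mp
    have hA : (P.tens.tmapIso hT.tmap_id hT.tmap_comp
        (Iso.refl x) (P.mod.massoc (𝟙_ V) (𝟙_ V) y)).hom =
        P.tens.tmap (𝟙 x) (P.mod.massoc (𝟙_ V) (𝟙_ V) y).hom := rfl
    rw [hA]
    calc P.tens.tmap (𝟙 x) (P.mod.massoc (𝟙_ V) (𝟙_ V) y).hom ≫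
          (P.α₂ (𝟙_ V) x (P.mod.act (𝟙_ V) y)).hom ≫
          P.mod.actMap (𝟙 (𝟙_ V))
            ((P.α₂ (𝟙_ V) x y).hom ≫ (P.mod.munit (P.tens.tensor x y)).hom)
        = (P.tens.tmap (𝟙 x) (P.mod.massoc (𝟙_ V) (𝟙_ V) y).hom ≫
            (P.α₂ (𝟙_ V) x (P.mod.act (𝟙_ V) y)).hom ≫
            P.mod.actMap (𝟙 (𝟙_ V)) (P.α₂ (𝟙_ V) x y).hom) ≫
            P.mod.actMap (𝟙 (𝟙_ V)) (P.mod.munit (P.tens.tensor x y)).hom := by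
          rw [actMap_comp']; simp only [assoc]
      _ = (P.α₂ (𝟙_ V ⊗ 𝟙_ V) x y).hom ≫
            (P.mod.massoc (𝟙_ V) (𝟙_ V) (P.tens.tensor x y)).hom ≫
            P.mod.actMap (𝟙 (𝟙_ V)) (P.mod.munit (P.tens.tensor x y)).hom := by
          rw [hP.α₂_massoc]; simp only [assoc]
      _ = (P.α₂ (𝟙_ V ⊗ 𝟙_ V) x y).hom ≫
            P.mod.actMap (ρ_ (𝟙_ V)).hom (𝟙 (P.tens.tensor x y)) := by
          rw [hM.triangle]
      _ = (P.α₂ (𝟙_ V ⊗ 𝟙_ V) x y).hom ≫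
            P.mod.actMap (ρ_ (𝟙_ V)).hom (P.tens.tmap (𝟙 x) (𝟙 y)) := by
          rw [hT.tmap_id]
      _ = P.tens.tmap (𝟙 x) (P.mod.actMap (ρ_ (𝟙_ V)).hom (𝟙 y)) ≫
            (P.α₂ (𝟙_ V) x y).hom := by
          rw [hP.α₂_natural (ρ_ (𝟙_ V)).hom (𝟙 x) (𝟙 y)]
      _ = P.tens.tmap (𝟙 x) ((P.mod.massoc (𝟙_ V) (𝟙_ V) y).hom ≫
            P.mod.actMap (𝟙 (𝟙_ V)) (P.mod.munit y).hom) ≫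
            (P.α₂ (𝟙_ V) x y).hom := by
          rw [hM.triangle]
      _ = P.tens.tmap (𝟙 x) (P.mod.massoc (𝟙_ V) (𝟙_ V) y).hom ≫
            P.tens.tmap (𝟙 x) (P.mod.actMap (𝟙 (𝟙_ V)) (P.mod.munit y).hom) ≫
            (P.α₂ (𝟙_ V) x y).hom := by
          rw [← assoc, ← hT.tmap_comp]; simp
      _ = P.tens.tmap (𝟙 x) (P.mod.massoc (𝟙_ V) (𝟙_ V) y).hom ≫
            (P.α₂ (𝟙_ V) x (P.mod.act (𝟙_ V) y)).hom ≫
            P.mod.actMap (𝟙 (𝟙_ V)) (P.tens.tmap (𝟙 x) (P.mod.munit y).hom) := by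
          rw [hP.α₂_natural (𝟙 (𝟙_ V)) (𝟙 x) (P.mod.munit y).hom]

end Stmt4

end ModMonPaper
end

section
/- Let M be a unital module monoidal category over a braided monoidal category V. Then for all v ∈ V and m ∈ M the two triangles (α¹&r) (id_v▷r_m) ∘ α¹_{v,m,1_M} = r_{v▷m} and (α²&l) (id_v▷l_m) ∘ α²_{v,1_M,m} = l_{v▷m} commute, where l and r are the left and right unitors of the monoidal structure on M. -/
open CategoryTheory MonoidalCategory Category

universe v₁ v₂ v₃ v₄ u₁ u₂ u₃ u₄

/-! ### Unital module monoidal categories -/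

namespace ModMonPaper

section UMM

variable (V : Type u₁) [Category.{v₁} V] [MonoidalCategory V]
variable (M : Type u₂) [Category.{v₂} M] [MonoidalCategory M]
variable (M' : Type u₃) [Category.{v₃} M'] [MonoidalCategory M']

/-- The data of a unital module monoidal category over `V` on the (unital) monoidal
category `M`: a module category structure together with the coherences `α₁` and `α₂`. -/
structure ModMonData extends ModuleData V M where
  α₁ : ∀ (v : V) (x y : M), act v x ⊗ y ≅ act v (x ⊗ y)
  α₂ : ∀ (v : V) (x y : M), x ⊗ act v y ≅ act v (x ⊗ y)

variable {V M M'}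

/-- The axioms of a unital module monoidal category over a braided category `V`. -/
structure ModMonData.IsModMon [BraidedCategory V] (P : ModMonData V M) : Prop where
  toIsModule : P.toModuleData.IsModule
  α₁_natural : ∀ {v v' : V} {x x' y y' : M} (f : v ⟶ v') (g : x ⟶ x') (h : y ⟶ y'),
    (P.actMap f g ⊗ₘ h) ≫ (P.α₁ v' x' y').hom = (P.α₁ v x y).hom ≫ P.actMap f (g ⊗ₘ h)
  α₂_natural : ∀ {v v' : V} {x x' y y' : M} (f : v ⟶ v') (g : x ⟶ x') (h : y ⟶ y'),
    (g ⊗ₘ P.actMap f h) ≫ (P.α₂ v' x' y').hom = (P.α₂ v x y).hom ≫ P.actMap f (g ⊗ₘ h)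
  α₁_assoc : ∀ (v : V) (l m n : M),
    ((P.α₁ v l m).hom ⊗ₘ 𝟙 n) ≫ (P.α₁ v (l ⊗ m) n).hom ≫ P.actMap (𝟙 v) (α_ l m n).hom =
      (α_ (P.act v l) m n).hom ≫ (P.α₁ v l (m ⊗ n)).hom
  α₁_massoc : ∀ (v w : V) (m n : M),
    ((P.massoc v w m).hom ⊗ₘ 𝟙 n) ≫ (P.α₁ v (P.act w m) n).hom ≫
        P.actMap (𝟙 v) (P.α₁ w m n).hom =
      (P.α₁ (v ⊗ w) m n).hom ≫ (P.massoc v w (m ⊗ n)).hom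
  α₂_assoc : ∀ (v : V) (l m n : M),
    (α_ l m (P.act v n)).hom ≫ (𝟙 l ⊗ₘ (P.α₂ v m n).hom) ≫ (P.α₂ v l (m ⊗ n)).hom =
      (P.α₂ v (l ⊗ m) n).hom ≫ P.actMap (𝟙 v) (α_ l m n).hom
  α₂_massoc : ∀ (v w : V) (m n : M),
    (𝟙 m ⊗ₘ (P.massoc v w n).hom) ≫ (P.α₂ v m (P.act w n)).hom ≫
        P.actMap (𝟙 v) (P.α₂ w m n).hom =
      (P.α₂ (v ⊗ w) m n).hom ≫ (P.massoc v w (m ⊗ n)).hom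
  α₁_α₂ : ∀ (v : V) (l m n : M),
    ((P.α₂ v l m).hom ⊗ₘ 𝟙 n) ≫ (P.α₁ v (l ⊗ m) n).hom ≫ P.actMap (𝟙 v) (α_ l m n).hom =
      (α_ l (P.act v m) n).hom ≫ (𝟙 l ⊗ₘ (P.α₁ v m n).hom) ≫ (P.α₂ v l (m ⊗ n)).hom
  braiding_act : ∀ (v w : V) (m n : M),
    (P.α₂ v (P.act w m) n).hom ≫ P.actMap (𝟙 v) (P.α₁ w m n).hom ≫
        (P.massoc v w (m ⊗ n)).inv ≫ P.actMap (β_ v w).hom (𝟙 (m ⊗ n)) =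
      (P.α₁ w m (P.act v n)).hom ≫ P.actMap (𝟙 w) (P.α₂ v m n).hom ≫
        (P.massoc w v (m ⊗ n)).inv

/-- The data of a unital module monoidal functor. -/
structure UMMFunctorData (P : ModMonData V M) (P' : ModMonData V M') where
  F : M ⥤ M'
  φ₂ : ∀ x y : M, F.obj x ⊗ F.obj y ≅ F.obj (x ⊗ y)
  φ₀ : 𝟙_ M' ≅ F.obj (𝟙_ M)
  s : ∀ (v : V) (x : M), P'.act v (F.obj x) ≅ F.obj (P.act v x)

/-- The axioms of a unital module monoidal functor. -/
structure UMMFunctorData.IsUMMFunctor {P : ModMonData V M} {P' : ModMonData V M'}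
    (D : UMMFunctorData P P') : Prop where
  φ₂_natural : ∀ {x x' y y' : M} (f : x ⟶ x') (g : y ⟶ y'),
    (D.F.map f ⊗ₘ D.F.map g) ≫ (D.φ₂ x' y').hom = (D.φ₂ x y).hom ≫ D.F.map (f ⊗ₘ g)
  hexagon : ∀ x y z : M,
    ((D.φ₂ x y).hom ⊗ₘ 𝟙 (D.F.obj z)) ≫ (D.φ₂ (x ⊗ y) z).hom ≫ D.F.map (α_ x y z).hom =
      (α_ (D.F.obj x) (D.F.obj y) (D.F.obj z)).hom ≫ (𝟙 (D.F.obj x) ⊗ₘ (D.φ₂ y z).hom) ≫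
        (D.φ₂ x (y ⊗ z)).hom
  φ₀_left : ∀ x : M,
    (D.φ₀.hom ⊗ₘ 𝟙 (D.F.obj x)) ≫ (D.φ₂ (𝟙_ M) x).hom ≫ D.F.map (λ_ x).hom =
      (λ_ (D.F.obj x)).hom
  φ₀_right : ∀ x : M,
    (𝟙 (D.F.obj x) ⊗ₘ D.φ₀.hom) ≫ (D.φ₂ x (𝟙_ M)).hom ≫ D.F.map (ρ_ x).hom =
      (ρ_ (D.F.obj x)).hom
  s_natural : ∀ {v w : V} {x y : M} (f : v ⟶ w) (g : x ⟶ y),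
    P'.actMap f (D.F.map g) ≫ (D.s w y).hom = (D.s v x).hom ≫ D.F.map (P.actMap f g)
  s_pentagon : ∀ (v w : V) (x : M),
    (D.s (v ⊗ w) x).hom ≫ D.F.map (P.massoc v w x).hom =
      (P'.massoc v w (D.F.obj x)).hom ≫ P'.actMap (𝟙 v) (D.s w x).hom ≫
        (D.s v (P.act w x)).hom
  s_triangle : ∀ x : M,
    (D.s (𝟙_ V) x).hom ≫ D.F.map (P.munit x).hom = (P'.munit (D.F.obj x)).hom
  compα₁ : ∀ (v : V) (x y : M),
    (P'.α₁ v (D.F.obj x) (D.F.obj y)).hom ≫ P'.actMap (𝟙 v) (D.φ₂ x y).hom ≫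
        (D.s v (x ⊗ y)).hom =
      ((D.s v x).hom ⊗ₘ 𝟙 (D.F.obj y)) ≫ (D.φ₂ (P.act v x) y).hom ≫
        D.F.map (P.α₁ v x y).hom
  compα₂ : ∀ (v : V) (x y : M),
    (P'.α₂ v (D.F.obj x) (D.F.obj y)).hom ≫ P'.actMap (𝟙 v) (D.φ₂ x y).hom ≫
        (D.s v (x ⊗ y)).hom =
      (𝟙 (D.F.obj x) ⊗ₘ (D.s v y).hom) ≫ (D.φ₂ x (P.act v y)).hom ≫
        D.F.map (P.α₂ v x y).hom

/-- The identity unital module monoidal functor data. -/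
def UMMFunctorData.id (P : ModMonData V M) : UMMFunctorData P P :=
  ⟨𝟭 M, fun x y => Iso.refl (x ⊗ y), Iso.refl (𝟙_ M), fun v x => Iso.refl (P.act v x)⟩

/-- Composition of unital module monoidal functor data. -/
def UMMFunctorData.comp {M'' : Type u₄} [Category.{v₄} M''] [MonoidalCategory M'']
    {P : ModMonData V M} {P' : ModMonData V M'} {P'' : ModMonData V M''}
    (D : UMMFunctorData P P') (E : UMMFunctorData P' P'') : UMMFunctorData P P'' :=
  ⟨D.F ⋙ E.F,
    fun x y => E.φ₂ (D.F.obj x) (D.F.obj y) ≪≫ E.F.mapIso (D.φ₂ x y),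
    E.φ₀ ≪≫ E.F.mapIso D.φ₀,
    fun v x => E.s v (D.F.obj x) ≪≫ E.F.mapIso (D.s v x)⟩

/-- Unital module monoidal natural transformations. -/
def IsUMMNT {P : ModMonData V M} {P' : ModMonData V M'}
    (D E : UMMFunctorData P P') (τ : D.F ⟶ E.F) : Prop :=
  (∀ x y : M, (D.φ₂ x y).hom ≫ τ.app (x ⊗ y) = (τ.app x ⊗ₘ τ.app y) ≫ (E.φ₂ x y).hom) ∧
    (D.φ₀.hom ≫ τ.app (𝟙_ M) = E.φ₀.hom) ∧
    ∀ (v : V) (x : M), (D.s v x).hom ≫ τ.app (P.act v x) =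
      P'.actMap (𝟙 v) (τ.app x) ≫ (E.s v x).hom

/-- `D` is an equivalence of unital module monoidal categories. -/
def UMMFunctorData.IsEquiv {P : ModMonData V M} {P' : ModMonData V M'}
    (D : UMMFunctorData P P') : Prop :=
  ∃ E : UMMFunctorData P' P, E.IsUMMFunctor ∧
    ∃ (η : (UMMFunctorData.id P).F ≅ (UMMFunctorData.comp D E).F)
      (ε : (UMMFunctorData.comp E D).F ≅ (UMMFunctorData.id P').F),
      IsUMMNT (UMMFunctorData.id P) (UMMFunctorData.comp D E) η.hom ∧
        IsUMMNT (UMMFunctorData.comp E D) (UMMFunctorData.id P') ε.hom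

end UMM

end ModMonPaper
namespace ModMonPaper

section Stmt7

variable {V : Type u₁} [Category.{v₁} V] [MonoidalCategory V] [BraidedCategory V]
variable {M : Type u₂} [Category.{v₂} M] [MonoidalCategory M]

/-- In any unital module monoidal category the two triangles
`(α¹ & r)` and `(α² & l)` commute. -/
theorem modMon_alpha_unitor_triangles (P : ModMonData V M) (hP : P.IsModMon)
    (v : V) (x : M) :
    (P.α₁ v x (𝟙_ M)).hom ≫ P.actMap (𝟙 v) (ρ_ x).hom = (ρ_ (P.act v x)).hom ∧
      (P.α₂ v (𝟙_ M) x).hom ≫ P.actMap (𝟙 v) (λ_ x).hom = (λ_ (P.act v x)).hom := by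
  have actComp : ∀ {a b c : M} (f : a ⟶ b) (g : b ⟶ c),
      P.actMap (𝟙 v) (f ≫ g) = P.actMap (𝟙 v) f ≫ P.actMap (𝟙 v) g := by
    intro a b c f g
    have := hP.toIsModule.actMap_comp (𝟙 v) (𝟙 v) f g
    simpa using this
  have actId : ∀ a : M, P.actMap (𝟙 v) (𝟙 a) = 𝟙 (P.act v a) :=
    fun a => hP.toIsModule.actMap_id v a
  constructor
  · -- (α¹ & r)
    set A : P.act v x ⊗ 𝟙_ M ⟶ P.act v x :=
      (P.α₁ v x (𝟙_ M)).hom ≫ P.actMap (𝟙 v) (ρ_ x).hom with hA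
    have key : ∀ n : M,
        (A ⊗ₘ 𝟙 n) ≫ (P.α₁ v x n).hom =
          ((ρ_ (P.act v x)).hom ⊗ₘ 𝟙 n) ≫ (P.α₁ v x n).hom := by
      intro n
      have tri : (ρ_ x).hom ⊗ₘ 𝟙 n = (α_ x (𝟙_ M) n).hom ≫ (𝟙 x ⊗ₘ (λ_ n).hom) := by
        simp [id_tensorHom, tensorHom_id]
      have tri' : (ρ_ (P.act v x)).hom ⊗ₘ 𝟙 n =
          (α_ (P.act v x) (𝟙_ M) n).hom ≫ (𝟙 (P.act v x) ⊗ₘ (λ_ n).hom) := by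
        simp [id_tensorHom, tensorHom_id]
      calc (A ⊗ₘ 𝟙 n) ≫ (P.α₁ v x n).hom
          = ((P.α₁ v x (𝟙_ M)).hom ⊗ₘ 𝟙 n) ≫
              ((P.actMap (𝟙 v) (ρ_ x).hom ⊗ₘ 𝟙 n) ≫ (P.α₁ v x n).hom) := by
            rw [hA, comp_tensor_id, assoc]
        _ = ((P.α₁ v x (𝟙_ M)).hom ⊗ₘ 𝟙 n) ≫ (P.α₁ v (x ⊗ 𝟙_ M) n).hom ≫
              P.actMap (𝟙 v) ((ρ_ x).hom ⊗ₘ 𝟙 n) := by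
            rw [hP.α₁_natural (𝟙 v) (ρ_ x).hom (𝟙 n)]
        _ = ((P.α₁ v x (𝟙_ M)).hom ⊗ₘ 𝟙 n) ≫ (P.α₁ v (x ⊗ 𝟙_ M) n).hom ≫
              P.actMap (𝟙 v) (α_ x (𝟙_ M) n).hom ≫
              P.actMap (𝟙 v) (𝟙 x ⊗ₘ (λ_ n).hom) := by
            rw [tri, actComp]
        _ = ((α_ (P.act v x) (𝟙_ M) n).hom ≫ (P.α₁ v x (𝟙_ M ⊗ n)).hom) ≫
              P.actMap (𝟙 v) (𝟙 x ⊗ₘ (λ_ n).hom) := by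
            rw [← hP.α₁_assoc v x (𝟙_ M) n]; simp only [assoc]
        _ = (α_ (P.act v x) (𝟙_ M) n).hom ≫
              (P.actMap (𝟙 v) (𝟙 x) ⊗ₘ (λ_ n).hom) ≫ (P.α₁ v x n).hom := by
            rw [assoc, ← hP.α₁_natural (𝟙 v) (𝟙 x) (λ_ n).hom]
        _ = ((ρ_ (P.act v x)).hom ⊗ₘ 𝟙 n) ≫ (P.α₁ v x n).hom := by
            rw [actId, tri']; simp only [assoc]
    have h1 : A ⊗ₘ 𝟙 (𝟙_ M) = (ρ_ (P.act v x)).hom ⊗ₘ 𝟙 (𝟙_ M) := by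
      have := key (𝟙_ M)
      rwa [cancel_mono] at this
    calc A = (ρ_ (P.act v x ⊗ 𝟙_ M)).inv ≫ ((ρ_ (P.act v x ⊗ 𝟙_ M)).hom ≫ A) := by simp
      _ = (ρ_ (P.act v x ⊗ 𝟙_ M)).inv ≫ (A ⊗ₘ 𝟙 (𝟙_ M)) ≫ (ρ_ (P.act v x)).hom := by
          rw [tensorHom_id, rightUnitor_naturality]
      _ = (ρ_ (P.act v x ⊗ 𝟙_ M)).inv ≫
            ((ρ_ (P.act v x)).hom ⊗ₘ 𝟙 (𝟙_ M)) ≫ (ρ_ (P.act v x)).hom := by rw [h1]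
      _ = (ρ_ (P.act v x)).hom := by
          rw [tensorHom_id, rightUnitor_naturality]; simp
  · -- (α² & l)
    set B : 𝟙_ M ⊗ P.act v x ⟶ P.act v x :=
      (P.α₂ v (𝟙_ M) x).hom ≫ P.actMap (𝟙 v) (λ_ x).hom with hB
    have key : ∀ n : M,
        (𝟙 n ⊗ₘ B) ≫ (P.α₂ v n x).hom =
          (𝟙 n ⊗ₘ (λ_ (P.act v x)).hom) ≫ (P.α₂ v n x).hom := by
      intro n
      have tri : (α_ n (𝟙_ M) x).hom ≫ (𝟙 n ⊗ₘ (λ_ x).hom) = (ρ_ n).hom ⊗ₘ 𝟙 x := by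
        simp [id_tensorHom, tensorHom_id]
      have tri' : (α_ n (𝟙_ M) (P.act v x)).inv ≫ ((ρ_ n).hom ⊗ₘ 𝟙 (P.act v x)) =
          𝟙 n ⊗ₘ (λ_ (P.act v x)).hom := by
        rw [Iso.inv_comp_eq]; simp [id_tensorHom, tensorHom_id]
      calc (𝟙 n ⊗ₘ B) ≫ (P.α₂ v n x).hom
          = (𝟙 n ⊗ₘ (P.α₂ v (𝟙_ M) x).hom) ≫
              ((𝟙 n ⊗ₘ P.actMap (𝟙 v) (λ_ x).hom) ≫ (P.α₂ v n x).hom) := by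
            rw [hB, id_tensor_comp, assoc]
        _ = (𝟙 n ⊗ₘ (P.α₂ v (𝟙_ M) x).hom) ≫ (P.α₂ v n (𝟙_ M ⊗ x)).hom ≫
              P.actMap (𝟙 v) (𝟙 n ⊗ₘ (λ_ x).hom) := by
            rw [hP.α₂_natural (𝟙 v) (𝟙 n) (λ_ x).hom]
        _ = (α_ n (𝟙_ M) (P.act v x)).inv ≫ ((P.α₂ v (n ⊗ 𝟙_ M) x).hom ≫
              P.actMap (𝟙 v) (α_ n (𝟙_ M) x).hom) ≫
              P.actMap (𝟙 v) (𝟙 n ⊗ₘ (λ_ x).hom) := by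
            rw [← hP.α₂_assoc v n (𝟙_ M) x]; simp only [assoc, Iso.inv_hom_id_assoc]
        _ = (α_ n (𝟙_ M) (P.act v x)).inv ≫ (P.α₂ v (n ⊗ 𝟙_ M) x).hom ≫
              P.actMap (𝟙 v) ((ρ_ n).hom ⊗ₘ 𝟙 x) := by
            rw [assoc, ← actComp, tri]
        _ = (α_ n (𝟙_ M) (P.act v x)).inv ≫
              ((ρ_ n).hom ⊗ₘ P.actMap (𝟙 v) (𝟙 x)) ≫ (P.α₂ v n x).hom := by
            rw [← hP.α₂_natural (𝟙 v) (ρ_ n).hom (𝟙 x)]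
        _ = (𝟙 n ⊗ₘ (λ_ (P.act v x)).hom) ≫ (P.α₂ v n x).hom := by
            rw [actId, ← assoc, tri']
    have h1 : 𝟙 (𝟙_ M) ⊗ₘ B = 𝟙 (𝟙_ M) ⊗ₘ (λ_ (P.act v x)).hom := by
      have := key (𝟙_ M)
      rwa [cancel_mono] at this
    calc B = (λ_ (𝟙_ M ⊗ P.act v x)).inv ≫ ((λ_ (𝟙_ M ⊗ P.act v x)).hom ≫ B) := by simp
      _ = (λ_ (𝟙_ M ⊗ P.act v x)).inv ≫ (𝟙 (𝟙_ M) ⊗ₘ B) ≫ (λ_ (P.act v x)).hom := by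
          rw [id_tensorHom, leftUnitor_naturality]
      _ = (λ_ (𝟙_ M ⊗ P.act v x)).inv ≫
            (𝟙 (𝟙_ M) ⊗ₘ (λ_ (P.act v x)).hom) ≫ (λ_ (P.act v x)).hom := by rw [h1]
      _ = (λ_ (P.act v x)).hom := by
          rw [id_tensorHom, leftUnitor_naturality]; simp


end Stmt7

end ModMonPaper
end

section
/- Let (T,F) be a pair over a braided monoidal category V. Then T, equipped with its given unital monoidal structure together with the action v▷m := F(v)⊗m (f▷g := F(f)⊗g), module associativity m_{v,w,m} := a_{F(v),F(w),m}∘(φ₂⁻¹_{v,w}⊗id_m), module unit l^▷_m := l_m∘(φ₀⁻¹⊗id_m), α¹_{v,m,n} := a_{F(v),m,n}, and α²_{v,m,n} := a_{F(v),m,n}∘(β⁻¹_{F(v),m}⊗id_n)∘a⁻¹_{m,F(v),n}, is a unital module monoidal category over V, where β_{F(v),-} is the half-braiding of F^Z(v) and φ₂, φ₀ are the monoidal structure of F. -/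
open CategoryTheory MonoidalCategory Category

universe v₁ v₂ v₃ v₄ u₁ u₂ u₃ u₄

/-! ### Pairs: braided central monoidal functors -/

namespace ModMonPaper

section Central

variable (V : Type u₁) [Category.{v₁} V] [MonoidalCategory V] [BraidedCategory V]
variable (T : Type u₂) [Category.{v₂} T] [MonoidalCategory T]
variable (T' : Type u₃) [Category.{v₃} T'] [MonoidalCategory T']

/-- The data of a braided central monoidal functor `V ⟶ T`, i.e. the data of a pair
`(T, F)`: the underlying functor `F`, the half-braidings of the chosen lift
`F^Z : V ⟶ Z(T)` to the Drinfeld center, and the monoidal structure `φ₂`, `φ₀`. -/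
structure CentralData where
  obj : V → T
  map : ∀ {v w : V}, (v ⟶ w) → (obj v ⟶ obj w)
  halfBraiding : ∀ (v : V) (t : T), obj v ⊗ t ≅ t ⊗ obj v
  φ₂ : ∀ v w : V, obj v ⊗ obj w ≅ obj (v ⊗ w)
  φ₀ : 𝟙_ T ≅ obj (𝟙_ V)

variable {V T T'}

/-- The axioms making `C : CentralData V T` into a braided central monoidal functor,
i.e. a pair `(T, F)`: `F` is a functor; each `(F v, halfBraiding v)` is an object of the
Drinfeld center `Z(T)`; `F f`, `φ₂` and `φ₀` are morphisms in `Z(T)`; the lift is a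
braided (strong) monoidal functor. -/
structure CentralData.IsCentral (C : CentralData V T) : Prop where
  map_id : ∀ v : V, C.map (𝟙 v) = 𝟙 (C.obj v)
  map_comp : ∀ {u v w : V} (f : u ⟶ v) (g : v ⟶ w), C.map (f ≫ g) = C.map f ≫ C.map g
  halfBraiding_natural : ∀ (v : V) {t t' : T} (f : t ⟶ t'),
    (𝟙 (C.obj v) ⊗ₘ f) ≫ (C.halfBraiding v t').hom =
      (C.halfBraiding v t).hom ≫ (f ⊗ₘ 𝟙 (C.obj v))
  halfBraiding_hex : ∀ (v : V) (x y : T),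
    (α_ (C.obj v) x y).hom ≫ (C.halfBraiding v (x ⊗ y)).hom ≫ (α_ x y (C.obj v)).hom =
      ((C.halfBraiding v x).hom ⊗ₘ 𝟙 y) ≫ (α_ x (C.obj v) y).hom ≫
        (𝟙 x ⊗ₘ (C.halfBraiding v y).hom)
  map_central : ∀ {v w : V} (f : v ⟶ w) (t : T),
    (C.map f ⊗ₘ 𝟙 t) ≫ (C.halfBraiding w t).hom =
      (C.halfBraiding v t).hom ≫ (𝟙 t ⊗ₘ C.map f)
  φ₂_natural : ∀ {v v' w w' : V} (f : v ⟶ v') (g : w ⟶ w'),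
    (C.map f ⊗ₘ C.map g) ≫ (C.φ₂ v' w').hom = (C.φ₂ v w).hom ≫ C.map (f ⊗ₘ g)
  φ₂_central : ∀ (v w : V) (t : T),
    ((C.φ₂ v w).hom ⊗ₘ 𝟙 t) ≫ (C.halfBraiding (v ⊗ w) t).hom =
      ((α_ (C.obj v) (C.obj w) t).hom ≫ (𝟙 (C.obj v) ⊗ₘ (C.halfBraiding w t).hom) ≫
        (α_ (C.obj v) t (C.obj w)).inv ≫ ((C.halfBraiding v t).hom ⊗ₘ 𝟙 (C.obj w)) ≫
          (α_ t (C.obj v) (C.obj w)).hom) ≫ (𝟙 t ⊗ₘ (C.φ₂ v w).hom)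
  φ₀_central : ∀ t : T,
    (C.φ₀.hom ⊗ₘ 𝟙 t) ≫ (C.halfBraiding (𝟙_ V) t).hom =
      ((λ_ t).hom ≫ (ρ_ t).inv) ≫ (𝟙 t ⊗ₘ C.φ₀.hom)
  hexagon : ∀ u v w : V,
    ((C.φ₂ u v).hom ⊗ₘ 𝟙 (C.obj w)) ≫ (C.φ₂ (u ⊗ v) w).hom ≫ C.map (α_ u v w).hom =
      (α_ (C.obj u) (C.obj v) (C.obj w)).hom ≫ (𝟙 (C.obj u) ⊗ₘ (C.φ₂ v w).hom) ≫
        (C.φ₂ u (v ⊗ w)).hom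
  φ₀_left : ∀ v : V,
    (C.φ₀.hom ⊗ₘ 𝟙 (C.obj v)) ≫ (C.φ₂ (𝟙_ V) v).hom ≫ C.map (λ_ v).hom =
      (λ_ (C.obj v)).hom
  φ₀_right : ∀ v : V,
    (𝟙 (C.obj v) ⊗ₘ C.φ₀.hom) ≫ (C.φ₂ v (𝟙_ V)).hom ≫ C.map (ρ_ v).hom =
      (ρ_ (C.obj v)).hom
  braided : ∀ v w : V,
    (C.φ₂ v w).hom ≫ C.map (β_ v w).hom =
      (C.halfBraiding v (C.obj w)).hom ≫ (C.φ₂ w v).hom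

/-- The data of a morphism of pairs `(T, C) ⟶ (T', C')`. -/
structure PairHomData (C : CentralData V T) (C' : CentralData V T') where
  G : T ⥤ T'
  φ₂ : ∀ x y : T, G.obj x ⊗ G.obj y ≅ G.obj (x ⊗ y)
  φ₀ : 𝟙_ T' ≅ G.obj (𝟙_ T)
  γ : ∀ v : V, C'.obj v ≅ G.obj (C.obj v)

/-- The axioms of a morphism of pairs: `(G, φ₂, φ₀)` is a (strong) monoidal functor and
`γ : F' ⟹ G ∘ F` is a monoidal natural isomorphism compatible with the half-braidings. -/
structure PairHomData.IsPairHom {C : CentralData V T} {C' : CentralData V T'}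
    (D : PairHomData C C') : Prop where
  φ₂_natural : ∀ {x x' y y' : T} (f : x ⟶ x') (g : y ⟶ y'),
    (D.G.map f ⊗ₘ D.G.map g) ≫ (D.φ₂ x' y').hom = (D.φ₂ x y).hom ≫ D.G.map (f ⊗ₘ g)
  hexagon : ∀ x y z : T,
    ((D.φ₂ x y).hom ⊗ₘ 𝟙 (D.G.obj z)) ≫ (D.φ₂ (x ⊗ y) z).hom ≫ D.G.map (α_ x y z).hom =
      (α_ (D.G.obj x) (D.G.obj y) (D.G.obj z)).hom ≫ (𝟙 (D.G.obj x) ⊗ₘ (D.φ₂ y z).hom) ≫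
        (D.φ₂ x (y ⊗ z)).hom
  φ₀_left : ∀ x : T,
    (D.φ₀.hom ⊗ₘ 𝟙 (D.G.obj x)) ≫ (D.φ₂ (𝟙_ T) x).hom ≫ D.G.map (λ_ x).hom =
      (λ_ (D.G.obj x)).hom
  φ₀_right : ∀ x : T,
    (𝟙 (D.G.obj x) ⊗ₘ D.φ₀.hom) ≫ (D.φ₂ x (𝟙_ T)).hom ≫ D.G.map (ρ_ x).hom =
      (ρ_ (D.G.obj x)).hom
  γ_natural : ∀ {v w : V} (f : v ⟶ w),
    C'.map f ≫ (D.γ w).hom = (D.γ v).hom ≫ D.G.map (C.map f)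
  γ_tensor : ∀ v w : V,
    (C'.φ₂ v w).hom ≫ (D.γ (v ⊗ w)).hom =
      ((D.γ v).hom ⊗ₘ (D.γ w).hom) ≫ (D.φ₂ (C.obj v) (C.obj w)).hom ≫
        D.G.map (C.φ₂ v w).hom
  γ_unit : C'.φ₀.hom ≫ (D.γ (𝟙_ V)).hom = D.φ₀.hom ≫ D.G.map C.φ₀.hom
  γ_braiding : ∀ (v : V) (t : T),
    ((D.γ v).hom ⊗ₘ 𝟙 (D.G.obj t)) ≫ (D.φ₂ (C.obj v) t).hom ≫
        D.G.map (C.halfBraiding v t).hom =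
      (C'.halfBraiding v (D.G.obj t)).hom ≫ (𝟙 (D.G.obj t) ⊗ₘ (D.γ v).hom) ≫
        (D.φ₂ t (C.obj v)).hom

/-- The identity morphism of pairs. -/
def PairHomData.id (C : CentralData V T) : PairHomData C C :=
  ⟨𝟭 T, fun x y => Iso.refl (x ⊗ y), Iso.refl (𝟙_ T), fun v => Iso.refl (C.obj v)⟩

/-- Composition of morphisms of pairs. -/
def PairHomData.comp {T'' : Type u₄} [Category.{v₄} T''] [MonoidalCategory T'']
    {C : CentralData V T} {C' : CentralData V T'} {C'' : CentralData V T''}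
    (D : PairHomData C C') (E : PairHomData C' C'') : PairHomData C C'' :=
  ⟨D.G ⋙ E.G,
    fun x y => E.φ₂ (D.G.obj x) (D.G.obj y) ≪≫ E.G.mapIso (D.φ₂ x y),
    E.φ₀ ≪≫ E.G.mapIso D.φ₀,
    fun v => E.γ v ≪≫ E.G.mapIso (D.γ v)⟩

/-- 2-morphisms of pairs. -/
def IsPair2Mor {C : CentralData V T} {C' : CentralData V T'}
    (D E : PairHomData C C') (τ : D.G ⟶ E.G) : Prop :=
  (∀ x y : T, (D.φ₂ x y).hom ≫ τ.app (x ⊗ y) = (τ.app x ⊗ₘ τ.app y) ≫ (E.φ₂ x y).hom) ∧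
    (D.φ₀.hom ≫ τ.app (𝟙_ T) = E.φ₀.hom) ∧
    ∀ v : V, (D.γ v).hom ≫ τ.app (C.obj v) = (E.γ v).hom

/-- `D` is an equivalence of pairs. -/
def PairHomData.IsEquiv {C : CentralData V T} {C' : CentralData V T'}
    (D : PairHomData C C') : Prop :=
  ∃ E : PairHomData C' C, E.IsPairHom ∧
    ∃ (η : (PairHomData.id C).G ≅ (PairHomData.comp D E).G)
      (ε : (PairHomData.comp E D).G ≅ (PairHomData.id C').G),
      IsPair2Mor (PairHomData.id C) (PairHomData.comp D E) η.hom ∧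
        IsPair2Mor (PairHomData.comp E D) (PairHomData.id C') ε.hom

end Central

end ModMonPaper
/-! ### The 2-functor `Ψ` and the pair associated to a module monoidal category -/

namespace ModMonPaper

section Psi

variable {V : Type u₁} [Category.{v₁} V] [MonoidalCategory V] [BraidedCategory V]
variable {T : Type u₂} [Category.{v₂} T] [MonoidalCategory T]
variable {T' : Type u₃} [Category.{v₃} T'] [MonoidalCategory T']

/-- `Ψ` on objects: the unital module monoidal structure induced by a pair. -/
def PsiData (C : CentralData V T) : ModMonData V T where
  act v x := C.obj v ⊗ x
  actMap f g := C.map f ⊗ₘ g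
  massoc v w x := tensorIso (C.φ₂ v w).symm (Iso.refl x) ≪≫ α_ (C.obj v) (C.obj w) x
  munit x := tensorIso C.φ₀.symm (Iso.refl x) ≪≫ λ_ x
  α₁ v x y := α_ (C.obj v) x y
  α₂ v x y := (α_ x (C.obj v) y).symm ≪≫
    tensorIso (C.halfBraiding v x).symm (Iso.refl y) ≪≫ α_ (C.obj v) x y

theorem psiData_actMap_id (C : CentralData V T) (hC : C.IsCentral) (v : V) (x : T) :
    (PsiData C).actMap (𝟙 v) (𝟙 x) = 𝟙 ((PsiData C).act v x) := by
  show C.map (𝟙 v) ⊗ₘ 𝟙 x = 𝟙 (C.obj v ⊗ x)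
  rw [hC.map_id, id_tensorHom_id]

theorem psiData_actMap_comp (C : CentralData V T) (hC : C.IsCentral)
    {v w u : V} {x y z : T} (f : v ⟶ w) (g : w ⟶ u) (h : x ⟶ y) (k : y ⟶ z) :
    (PsiData C).actMap (f ≫ g) (h ≫ k) =
      (PsiData C).actMap f h ≫ (PsiData C).actMap g k := by
  show C.map (f ≫ g) ⊗ₘ (h ≫ k) = (C.map f ⊗ₘ h) ≫ (C.map g ⊗ₘ k)
  rw [hC.map_comp, ← tensorHom_comp_tensorHom]

/-- `Ψ` on 1-morphisms: the unital module monoidal functor induced by a morphism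
of pairs. -/
def PsiHom {C : CentralData V T} {C' : CentralData V T'} (D : PairHomData C C') :
    UMMFunctorData (PsiData C) (PsiData C') where
  F := D.G
  φ₂ := D.φ₂
  φ₀ := D.φ₀
  s v x := tensorIso (D.γ v) (Iso.refl (D.G.obj x)) ≪≫ D.φ₂ (C.obj v) x

variable {M : Type u₂} [Category.{v₂} M] [MonoidalCategory M]

/-- The pair associated to a unital module monoidal category:
`F v := v ▷ 𝟙`, with the half-braiding, `φ₂` and `φ₀` of the paper. -/
def pairOfModMon (P : ModMonData V M)
    (hid : ∀ (v : V) (x : M), P.actMap (𝟙 v) (𝟙 x) = 𝟙 (P.act v x))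
    (hcomp : ∀ {v w u : V} {x y z : M} (f : v ⟶ w) (g : w ⟶ u) (h : x ⟶ y) (k : y ⟶ z),
      P.actMap (f ≫ g) (h ≫ k) = P.actMap f h ≫ P.actMap g k) :
    CentralData V M where
  obj v := P.act v (𝟙_ M)
  map f := P.actMap f (𝟙 (𝟙_ M))
  halfBraiding v t := P.α₁ v (𝟙_ M) t ≪≫
    P.toModuleData.actIso hid hcomp v (λ_ t ≪≫ (ρ_ t).symm) ≪≫ (P.α₂ v t (𝟙_ M)).symm
  φ₂ v w := P.α₁ v (𝟙_ M) (P.act w (𝟙_ M)) ≪≫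
    P.toModuleData.actIso hid hcomp v (P.α₂ w (𝟙_ M) (𝟙_ M)) ≪≫
      (P.massoc v w (𝟙_ M ⊗ 𝟙_ M)).symm ≪≫
        P.toModuleData.actIso hid hcomp (v ⊗ w) (ρ_ (𝟙_ M))
  φ₀ := (P.munit (𝟙_ M)).symm

end Psi

end ModMonPaper
namespace ModMonPaper

section Stmt11

variable {V : Type u₁} [Category.{v₁} V] [MonoidalCategory V] [BraidedCategory V]
variable {T : Type u₂} [Category.{v₂} T] [MonoidalCategory T]

set_option maxHeartbeats 1600000 in
/-- Given a pair `(T, F)` over `V`, the category `T` with its given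
unital monoidal structure, the action `v ▷ m := F v ⊗ m`, module associativity
`m := a ∘ (φ₂⁻¹ ⊗ id)`, module unit `l^▷ := l ∘ (φ₀⁻¹ ⊗ id)`, `α¹ := a` and
`α² := a ∘ (β⁻¹ ⊗ id) ∘ a⁻¹`, is a unital module monoidal category over `V`. -/
theorem psiData_isModMon (C : CentralData V T) (hC : C.IsCentral) :
    (PsiData C).IsModMon := by
  have hbnat : ∀ {v w : V} {x y : T} (f : v ⟶ w) (g : x ⟶ y),
      (C.map f ⊗ₘ g) ≫ (C.halfBraiding w y).hom =
        (C.halfBraiding v x).hom ≫ (g ⊗ₘ C.map f) := by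
    intro v w x y f g
    have hb1 : ∀ (v : V) {t t' : T} (f : t ⟶ t'),
        C.obj v ◁ f ≫ (C.halfBraiding v t').hom = (C.halfBraiding v t).hom ≫ f ▷ C.obj v := by
      intro v t t' f
      simpa [id_tensorHom, tensorHom_id] using hC.halfBraiding_natural v f
    have hb2 : ∀ {v w : V} (f : v ⟶ w) (t : T),
        C.map f ▷ t ≫ (C.halfBraiding w t).hom = (C.halfBraiding v t).hom ≫ t ◁ C.map f := by
      intro v w f t
      simpa [id_tensorHom, tensorHom_id] using hC.map_central f t
    rw [MonoidalCategory.tensorHom_def, assoc, hb1, ← assoc, hb2, assoc, MonoidalCategory.tensorHom_def]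
    simp [whisker_exchange]
  have hbnat' : ∀ {v w : V} {x y : T} (f : v ⟶ w) (g : x ⟶ y),
      (g ⊗ₘ C.map f) ≫ (C.halfBraiding w y).inv =
        (C.halfBraiding v x).inv ≫ (C.map f ⊗ₘ g) := by
    intro v w x y f g
    rw [Iso.comp_inv_eq, assoc, hbnat, Iso.inv_hom_id_assoc]
  have hbt : ∀ (v : V) (l m : T), (C.halfBraiding v (l ⊗ m)).inv =
      (α_ l m (C.obj v)).hom ≫ (𝟙 l ⊗ₘ (C.halfBraiding v m).inv) ≫ (α_ l (C.obj v) m).inv ≫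
        ((C.halfBraiding v l).inv ⊗ₘ 𝟙 m) ≫ (α_ (C.obj v) l m).hom := by
    intro v l m
    have h' : (C.halfBraiding v (l ⊗ m)).hom =
        (α_ (C.obj v) l m).inv ≫ (((C.halfBraiding v l).hom ⊗ₘ 𝟙 m) ≫ (α_ l (C.obj v) m).hom ≫
          (𝟙 l ⊗ₘ (C.halfBraiding v m).hom)) ≫ (α_ l m (C.obj v)).inv := by
      rw [← hC.halfBraiding_hex]
      simp
    rw [← cancel_epi (C.halfBraiding v (l ⊗ m)).hom, Iso.hom_inv_id, h']
    simp [tensorHom_comp_tensorHom_assoc, tensorHom_comp_tensorHom]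
  have hφc : ∀ (v w : V) (t : T), (C.halfBraiding (v ⊗ w) t).inv =
      (𝟙 t ⊗ₘ (C.φ₂ v w).inv) ≫ (α_ t (C.obj v) (C.obj w)).inv ≫
        ((C.halfBraiding v t).inv ⊗ₘ 𝟙 (C.obj w)) ≫ (α_ (C.obj v) t (C.obj w)).hom ≫
          (𝟙 (C.obj v) ⊗ₘ (C.halfBraiding w t).inv) ≫ (α_ (C.obj v) (C.obj w) t).inv ≫
            ((C.φ₂ v w).hom ⊗ₘ 𝟙 t) := by
    intro v w t
    have h' : (C.halfBraiding (v ⊗ w) t).hom =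
        ((C.φ₂ v w).inv ⊗ₘ 𝟙 t) ≫ (α_ (C.obj v) (C.obj w) t).hom ≫
          (𝟙 (C.obj v) ⊗ₘ (C.halfBraiding w t).hom) ≫ (α_ (C.obj v) t (C.obj w)).inv ≫
            ((C.halfBraiding v t).hom ⊗ₘ 𝟙 (C.obj w)) ≫ (α_ t (C.obj v) (C.obj w)).hom ≫
              (𝟙 t ⊗ₘ (C.φ₂ v w).hom) := by
      rw [← cancel_epi ((C.φ₂ v w).hom ⊗ₘ 𝟙 t), hC.φ₂_central]
      simp [tensorHom_comp_tensorHom_assoc, tensorHom_comp_tensorHom]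
    rw [← cancel_epi (C.halfBraiding (v ⊗ w) t).hom, Iso.hom_inv_id, h']
    simp [tensorHom_comp_tensorHom_assoc, tensorHom_comp_tensorHom]
  constructor
  case toIsModule =>
    constructor
    case actMap_id => exact psiData_actMap_id C hC
    case actMap_comp => exact fun f g h k => psiData_actMap_comp C hC f g h k
    case massoc_natural =>
      intro v v' w w' x x' f g h
      dsimp [PsiData, tensorIso]
      have h1 : C.map (f ⊗ₘ g) ≫ (C.φ₂ v' w').inv = (C.φ₂ v w).inv ≫ (C.map f ⊗ₘ C.map g) := by
        rw [Iso.comp_inv_eq, assoc, hC.φ₂_natural, Iso.inv_hom_id_assoc]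
      rw [tensorHom_comp_tensorHom_assoc, h1, comp_id,
        show ((C.φ₂ v w).inv ≫ (C.map f ⊗ₘ C.map g)) ⊗ₘ h =
          ((C.φ₂ v w).inv ⊗ₘ 𝟙 x) ≫ ((C.map f ⊗ₘ C.map g) ⊗ₘ h) from by
            rw [tensorHom_comp_tensorHom, id_comp],
        assoc, associator_naturality, assoc]
    case munit_natural =>
      intro x x' h
      dsimp [PsiData, tensorIso]
      rw [hC.map_id]
      simp only [tensorHom_id, id_tensorHom, tensorHom_comp_tensorHom_assoc]
      simp [whisker_exchange_assoc]
    case pentagon =>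
      intro u v w x
      dsimp [PsiData, tensorIso]
      rw [hC.map_id]
      have hx : C.map (α_ u v w).hom = (C.φ₂ (u ⊗ v) w).inv ≫ ((C.φ₂ u v).inv ⊗ₘ 𝟙 (C.obj w)) ≫
          (α_ (C.obj u) (C.obj v) (C.obj w)).hom ≫ (𝟙 (C.obj u) ⊗ₘ (C.φ₂ v w).hom) ≫ (C.φ₂ u (v ⊗ w)).hom := by
        rw [← hC.hexagon]
        simp [tensorHom_comp_tensorHom_assoc]
      rw [hx]
      simp only [tensorHom_id, id_tensorHom]
      simp only [tensorHom_comp_tensorHom_assoc, tensorHom_comp_tensorHom, comp_id, id_comp, assoc,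
        comp_whiskerRight, MonoidalCategory.whiskerLeft_comp, Iso.hom_inv_id_assoc,
        hom_inv_whiskerRight_assoc, whiskerLeft_hom_inv_assoc]
      rw [associator_naturality_middle_assoc]
      simp only [← MonoidalCategory.whiskerLeft_comp_assoc, hom_inv_whiskerRight_assoc,
        hom_inv_whiskerRight, Iso.hom_inv_id_assoc, MonoidalCategory.whiskerLeft_comp, assoc]
      coherence
    case triangle =>
      intro v x
      dsimp [PsiData, tensorIso]
      rw [hC.map_id]
      have h0 : C.map (ρ_ v).hom = (C.φ₂ v (𝟙_ V)).inv ≫ (𝟙 (C.obj v) ⊗ₘ C.φ₀.inv) ≫ (ρ_ (C.obj v)).hom := by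
        rw [← hC.φ₀_right]
        simp [tensorHom_comp_tensorHom_assoc]
      rw [h0]
      simp only [tensorHom_id, id_tensorHom]
      simp [tensorHom_comp_tensorHom_assoc, tensorHom_comp_tensorHom]
  case α₁_natural =>
    intro v v' x x' y y' f g h
    exact associator_naturality (C.map f) g h
  case α₂_natural =>
    intro v v' x x' y y' f g h
    dsimp [PsiData, tensorIso]
    rw [associator_inv_naturality_assoc, tensorHom_comp_tensorHom_assoc, hbnat' f g, comp_id,
      show ((C.halfBraiding v x).inv ≫ (C.map f ⊗ₘ g)) ⊗ₘ h =
        ((C.halfBraiding v x).inv ⊗ₘ 𝟙 y) ≫ ((C.map f ⊗ₘ g) ⊗ₘ h) from by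
          rw [tensorHom_comp_tensorHom, id_comp],
      assoc, associator_naturality]
    simp
  case α₁_assoc =>
    intro v l m n
    dsimp [PsiData, tensorIso]; rw [hC.map_id]
    simp only [tensorHom_id, id_tensorHom]; exact pentagon _ _ _ _
  case α₁_massoc =>
    intro v w m n
    dsimp [PsiData, tensorIso]; rw [hC.map_id]
    simp only [tensorHom_id, id_tensorHom]; coherence
  case α₂_assoc =>
    intro v l m n
    dsimp [PsiData, tensorIso]
    rw [hC.map_id]
    rw [hbt]
    simp only [tensorHom_id, id_tensorHom, comp_whiskerRight, MonoidalCategory.whiskerLeft_comp, assoc]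
    coherence
  case α₂_massoc =>
    intro v w m n
    dsimp [PsiData, tensorIso]
    rw [hC.map_id, hφc]
    simp only [tensorHom_id, id_tensorHom, comp_whiskerRight, MonoidalCategory.whiskerLeft_comp,
      assoc, associator_naturality_left_assoc, hom_inv_whiskerRight_assoc, hom_inv_whiskerRight,
      Iso.hom_inv_id_assoc, comp_id]
    coherence
  case α₁_α₂ =>
    intro v l m n
    dsimp [PsiData, tensorIso]; rw [hC.map_id]
    simp only [tensorHom_id, id_tensorHom]; coherence
  case braiding_act =>
    intro v w m n
    dsimp [PsiData, tensorIso]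
    have hβ : C.map (β_ v w).hom = (C.φ₂ v w).inv ≫ (C.halfBraiding v (C.obj w)).hom ≫
        (C.φ₂ w v).hom := by
      rw [← cancel_epi (C.φ₂ v w).hom, hC.braided, Iso.hom_inv_id_assoc]
    rw [hC.map_id, hC.map_id, hβ, hbt]
    simp only [tensorHom_id, id_tensorHom, comp_whiskerRight, MonoidalCategory.whiskerLeft_comp,
      assoc, hom_inv_whiskerRight_assoc, hom_inv_whiskerRight, inv_hom_whiskerRight_assoc,
      inv_hom_whiskerRight, Iso.hom_inv_id_assoc, Iso.inv_hom_id_assoc, comp_id]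
    rw [pentagon_assoc, Iso.hom_inv_id_assoc, associator_naturality_left_assoc,
      inv_hom_whiskerRight_assoc]
    coherence


end Stmt11

end ModMonPaper
end

section
/- Let (G,φ₂,φ₀,γ) : (T,F) → (T',F') be a morphism of pairs over a braided monoidal category V. Then (G,φ₂,φ₀,s^{Ψ(G)}) with s^{Ψ(G)}_{v,m} := φ₂_{F(v),m}∘(γ_v⊗'id_{G(m)}) is a unital module monoidal functor Ψ(T,F) → Ψ(T',F'), where Ψ(T,F) and Ψ(T',F') carry the module monoidal structures induced by F and F'. -/
open CategoryTheory MonoidalCategory Category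

universe v₁ v₂ v₃ v₄ u₁ u₂ u₃ u₄

namespace ModMonPaper

section Stmt12

variable {V : Type u₁} [Category.{v₁} V] [MonoidalCategory V] [BraidedCategory V]
variable {T : Type u₂} [Category.{v₂} T] [MonoidalCategory T]
variable {T' : Type u₃} [Category.{v₃} T'] [MonoidalCategory T']

/-- Given a morphism of pairs `(G, φ₂, φ₀, γ) : (T, F) ⟶ (T', F')`,
the data `(G, φ₂, φ₀, s)` with `s_{v,m} := φ₂ ∘ (γ_v ⊗' id)` is a unital module monoidal
functor `Ψ(T, F) ⟶ Ψ(T', F')`. -/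
theorem psiHom_isUMMFunctor {C : CentralData V T} {C' : CentralData V T'}
    (hC : C.IsCentral) (hC' : C'.IsCentral)
    (D : PairHomData C C') (hD : D.IsPairHom) :
    (PsiHom D).IsUMMFunctor := by
  have hbr : ∀ (v : V) (t : T),
      (𝟙 (D.G.obj t) ⊗ₘ (D.γ v).hom) ≫ (D.φ₂ t (C.obj v)).hom ≫
          D.G.map (C.halfBraiding v t).inv =
        (C'.halfBraiding v (D.G.obj t)).inv ≫ ((D.γ v).hom ⊗ₘ 𝟙 (D.G.obj t)) ≫
          (D.φ₂ (C.obj v) t).hom := by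
    intro v t
    rw [← cancel_mono (D.G.map (C.halfBraiding v t).hom)]
    slice_lhs 3 4 => rw [← D.G.map_comp, Iso.inv_hom_id, D.G.map_id]
    slice_rhs 2 4 => rw [hD.γ_braiding]
    simp
  constructor
  case φ₂_natural => exact fun f g => hD.φ₂_natural f g
  case hexagon => exact hD.hexagon
  case φ₀_left => exact hD.φ₀_left
  case φ₀_right => exact hD.φ₀_right
  case s_natural =>
    intro v w x y f g
    dsimp only [PsiHom, PsiData]
    simp only [Iso.trans_hom, tensorIso_hom, Iso.refl_hom, Iso.symm_hom, assoc]
    have h1 : (C'.map f ⊗ₘ D.G.map g) ≫ ((D.γ w).hom ⊗ₘ 𝟙 (D.G.obj y)) =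
        ((D.γ v).hom ⊗ₘ 𝟙 (D.G.obj x)) ≫ (D.G.map (C.map f) ⊗ₘ D.G.map g) := by
      rw [tensorHom_comp_tensorHom, tensorHom_comp_tensorHom, hD.γ_natural, comp_id, id_comp]
    rw [reassoc_of% h1, hD.φ₂_natural]
  case s_pentagon =>
    intro v w x
    dsimp only [PsiHom, PsiData]
    simp only [Iso.trans_hom, tensorIso_hom, Iso.refl_hom, Iso.symm_hom, assoc]
    have hγt : (D.γ (v ⊗ w)).hom = (C'.φ₂ v w).inv ≫ ((D.γ v).hom ⊗ₘ (D.γ w).hom) ≫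
        (D.φ₂ (C.obj v) (C.obj w)).hom ≫ D.G.map (C.φ₂ v w).hom := by
      rw [← hD.γ_tensor, Iso.inv_hom_id_assoc]
    have key1 : (D.G.map (C.φ₂ v w).hom ⊗ₘ 𝟙 (D.G.obj x)) ≫
        (D.φ₂ (C.obj (v ⊗ w)) x).hom ≫ D.G.map ((C.φ₂ v w).inv ⊗ₘ 𝟙 x) =
        (D.φ₂ (C.obj v ⊗ C.obj w) x).hom := by
      have h := hD.φ₂_natural (C.φ₂ v w).hom (𝟙 x)
      rw [D.G.map_id] at h
      rw [reassoc_of% h, ← D.G.map_comp, tensorHom_comp_tensorHom, Iso.hom_inv_id, comp_id,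
        id_tensorHom_id, D.G.map_id, comp_id]
    have tail : ((D.γ v).hom ⊗ₘ ((D.γ w).hom ⊗ₘ 𝟙 (D.G.obj x))) ≫
        (𝟙 (D.G.obj (C.obj v)) ⊗ₘ (D.φ₂ (C.obj w) x).hom) =
        (𝟙 (C'.obj v) ⊗ₘ ((D.γ w).hom ⊗ₘ 𝟙 (D.G.obj x)) ≫ (D.φ₂ (C.obj w) x).hom) ≫
          ((D.γ v).hom ⊗ₘ 𝟙 (D.G.obj (C.obj w ⊗ x))) := by
      rw [tensorHom_comp_tensorHom, tensorHom_comp_tensorHom]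
      simp only [comp_id, id_comp]
    rw [hγt, hC'.map_id, D.G.map_comp]
    simp only [comp_tensor_id, assoc]
    slice_lhs 4 6 => rw [key1]
    slice_lhs 3 5 => rw [hD.hexagon]
    slice_lhs 2 3 => rw [associator_naturality]
    simp only [assoc]
    rw [reassoc_of% tail]
  case s_triangle =>
    intro x
    dsimp only [PsiHom, PsiData]
    simp only [Iso.trans_hom, tensorIso_hom, Iso.refl_hom, Iso.symm_hom, assoc]
    have hγ : (D.γ (𝟙_ V)).hom = C'.φ₀.inv ≫ D.φ₀.hom ≫ D.G.map C.φ₀.hom := by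
      rw [← hD.γ_unit, Iso.inv_hom_id_assoc]
    have key : (D.G.map C.φ₀.hom ⊗ₘ 𝟙 (D.G.obj x)) ≫ (D.φ₂ (C.obj (𝟙_ V)) x).hom ≫
        D.G.map ((C.φ₀.inv ⊗ₘ 𝟙 x) ≫ (λ_ x).hom) =
        (D.φ₂ (𝟙_ T) x).hom ≫ D.G.map (λ_ x).hom := by
      have h := hD.φ₂_natural C.φ₀.hom (𝟙 x)
      rw [D.G.map_id] at h
      rw [D.G.map_comp, reassoc_of% h, ← D.G.map_comp_assoc, tensorHom_comp_tensorHom,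
        Iso.hom_inv_id, comp_id, id_tensorHom_id, D.G.map_id, id_comp]
    rw [hγ, comp_tensor_id, comp_tensor_id]
    simp only [assoc]
    rw [key, hD.φ₀_left]
  case compα₁ =>
    intro v x y
    dsimp only [PsiHom, PsiData]
    simp only [Iso.trans_hom, tensorIso_hom, Iso.refl_hom, Iso.symm_hom, assoc]
    have h1 : (𝟙 (C'.obj v) ⊗ₘ (D.φ₂ x y).hom) ≫ ((D.γ v).hom ⊗ₘ 𝟙 (D.G.obj (x ⊗ y))) =
        ((D.γ v).hom ⊗ₘ 𝟙 (D.G.obj x ⊗ D.G.obj y)) ≫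
          (𝟙 (D.G.obj (C.obj v)) ⊗ₘ (D.φ₂ x y).hom) := by
      rw [id_tensor_comp_tensor_id, tensor_id_comp_id_tensor]
    have h2 : (((D.γ v).hom ⊗ₘ 𝟙 (D.G.obj x)) ⊗ₘ 𝟙 (D.G.obj y)) ≫
        (α_ (D.G.obj (C.obj v)) (D.G.obj x) (D.G.obj y)).hom =
        (α_ (C'.obj v) (D.G.obj x) (D.G.obj y)).hom ≫
          ((D.γ v).hom ⊗ₘ 𝟙 (D.G.obj x ⊗ D.G.obj y)) := by
      simp
    rw [hC'.map_id, comp_tensor_id]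
    simp only [assoc]
    slice_rhs 2 4 => rw [hD.hexagon]
    slice_rhs 1 2 => rw [h2]
    rw [reassoc_of% h1]
    simp only [assoc]
  case compα₂ =>
    intro v x y
    dsimp only [PsiHom, PsiData]
    simp only [Iso.trans_hom, tensorIso_hom, Iso.refl_hom, Iso.symm_hom, assoc]
    have h1 : (𝟙 (C'.obj v) ⊗ₘ (D.φ₂ x y).hom) ≫ ((D.γ v).hom ⊗ₘ 𝟙 (D.G.obj (x ⊗ y))) =
        ((D.γ v).hom ⊗ₘ 𝟙 (D.G.obj x ⊗ D.G.obj y)) ≫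
          (𝟙 (D.G.obj (C.obj v)) ⊗ₘ (D.φ₂ x y).hom) := by
      rw [id_tensor_comp_tensor_id, tensor_id_comp_id_tensor]
    have h2 : (((D.γ v).hom ⊗ₘ 𝟙 (D.G.obj x)) ⊗ₘ 𝟙 (D.G.obj y)) ≫
        (α_ (D.G.obj (C.obj v)) (D.G.obj x) (D.G.obj y)).hom =
        (α_ (C'.obj v) (D.G.obj x) (D.G.obj y)).hom ≫
          ((D.γ v).hom ⊗ₘ 𝟙 (D.G.obj x ⊗ D.G.obj y)) := by
      simp
    have h3 : ((C'.halfBraiding v (D.G.obj x)).inv ⊗ₘ 𝟙 (D.G.obj y)) ≫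
        (((D.γ v).hom ⊗ₘ 𝟙 (D.G.obj x)) ⊗ₘ 𝟙 (D.G.obj y)) ≫
          ((D.φ₂ (C.obj v) x).hom ⊗ₘ 𝟙 (D.G.obj y)) =
        ((𝟙 (D.G.obj x) ⊗ₘ (D.γ v).hom) ⊗ₘ 𝟙 (D.G.obj y)) ≫
          ((D.φ₂ x (C.obj v)).hom ⊗ₘ 𝟙 (D.G.obj y)) ≫
            (D.G.map (C.halfBraiding v x).inv ⊗ₘ 𝟙 (D.G.obj y)) := by
      simp only [← comp_tensor_id, assoc]
      rw [hbr]
    have h4 : (D.G.map (C.halfBraiding v x).inv ⊗ₘ 𝟙 (D.G.obj y)) ≫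
        (D.φ₂ (C.obj v ⊗ x) y).hom =
        (D.φ₂ (x ⊗ C.obj v) y).hom ≫ D.G.map ((C.halfBraiding v x).inv ⊗ₘ 𝟙 y) := by
      have h := hD.φ₂_natural (C.halfBraiding v x).inv (𝟙 y)
      rwa [D.G.map_id] at h
    have h5 : (𝟙 (D.G.obj x) ⊗ₘ (D.φ₂ (C.obj v) y).hom) ≫ (D.φ₂ x (C.obj v ⊗ y)).hom ≫
        D.G.map (α_ x (C.obj v) y).inv =
        (α_ (D.G.obj x) (D.G.obj (C.obj v)) (D.G.obj y)).inv ≫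
          ((D.φ₂ x (C.obj v)).hom ⊗ₘ 𝟙 (D.G.obj y)) ≫ (D.φ₂ (x ⊗ C.obj v) y).hom := by
      rw [← cancel_mono (D.G.map (α_ x (C.obj v) y).hom)]
      slice_lhs 3 4 => rw [← D.G.map_comp, Iso.inv_hom_id, D.G.map_id]
      simp only [assoc, comp_id]
      rw [hD.hexagon x (C.obj v) y, Iso.inv_hom_id_assoc]
    have h6 : (𝟙 (D.G.obj x) ⊗ₘ ((D.γ v).hom ⊗ₘ 𝟙 (D.G.obj y))) ≫
        (α_ (D.G.obj x) (D.G.obj (C.obj v)) (D.G.obj y)).inv =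
        (α_ (D.G.obj x) (C'.obj v) (D.G.obj y)).inv ≫
          ((𝟙 (D.G.obj x) ⊗ₘ (D.γ v).hom) ⊗ₘ 𝟙 (D.G.obj y)) := by
      simp
    rw [hC'.map_id]
    rw [reassoc_of% h1]
    slice_lhs 3 4 => rw [← h2]
    slice_lhs 4 6 => rw [← hD.hexagon]
    slice_lhs 2 4 => rw [h3]
    rw [D.G.map_comp, D.G.map_comp, id_tensor_comp]
    slice_rhs 2 4 => rw [h5]
    slice_rhs 4 5 => rw [← h4]
    slice_rhs 1 2 => rw [h6]
    simp only [assoc]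

end Stmt12

end ModMonPaper
end

section
/- Let G, G' : (T,F) → (T',F') be morphisms of pairs over a braided monoidal category V and let η : G ⇒ G' be a 2-morphism of pairs. Then η is a unital module monoidal natural transformation Ψ(G) ⇒ Ψ(G'); in particular η satisfies the module naturality square η_{F(v)⊗m}∘φ₂^G_{F(v),m}∘(γ^G_v⊗'id_{G(m)}) = φ₂^{G'}_{F(v),m}∘(γ^{G'}_v⊗'id_{G'(m)})∘(id_{F'(v)}⊗'η_m) for all v ∈ V and m ∈ T. -/
open CategoryTheory MonoidalCategory Category

universe v₁ v₂ v₃ v₄ u₁ u₂ u₃ u₄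

namespace ModMonPaper

section Stmt13

variable {V : Type u₁} [Category.{v₁} V] [MonoidalCategory V] [BraidedCategory V]
variable {T : Type u₂} [Category.{v₂} T] [MonoidalCategory T]
variable {T' : Type u₃} [Category.{v₃} T'] [MonoidalCategory T']

/-- A 2-morphism of pairs `η : G ⟹ G'` is a unital module monoidal
natural transformation `Ψ(G) ⟹ Ψ(G')`; in particular it satisfies the module naturality
square for the induced module structures. -/
theorem psi_of_pair2Mor {C : CentralData V T} {C' : CentralData V T'}
    (hC : C.IsCentral) (hC' : C'.IsCentral)
    (D D' : PairHomData C C') (hD : D.IsPairHom) (hD' : D'.IsPairHom)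
    (η : D.G ⟶ D'.G) (hη : IsPair2Mor D D' η) :
    IsUMMNT (PsiHom D) (PsiHom D') η ∧
      ∀ (v : V) (m : T),
        ((D.γ v).hom ⊗ₘ 𝟙 (D.G.obj m)) ≫ (D.φ₂ (C.obj v) m).hom ≫ η.app (C.obj v ⊗ m) =
          (𝟙 (C'.obj v) ⊗ₘ η.app m) ≫ ((D'.γ v).hom ⊗ₘ 𝟙 (D'.G.obj m)) ≫
            (D'.φ₂ (C.obj v) m).hom := by
  obtain ⟨h₂, h₀, hγ⟩ := hη
  have key : ∀ (v : V) (m : T),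
      ((D.γ v).hom ⊗ₘ 𝟙 (D.G.obj m)) ≫ (D.φ₂ (C.obj v) m).hom ≫ η.app (C.obj v ⊗ m) =
        (𝟙 (C'.obj v) ⊗ₘ η.app m) ≫ ((D'.γ v).hom ⊗ₘ 𝟙 (D'.G.obj m)) ≫
          (D'.φ₂ (C.obj v) m).hom := by
    intro v m
    rw [h₂, ← Category.assoc, tensorHom_comp_tensorHom, hγ, ← Category.assoc, tensorHom_comp_tensorHom]
    simp
  refine ⟨⟨h₂, h₀, ?_⟩, key⟩
  intro v m
  have : (PsiData C').actMap (𝟙 v) (η.app m) = 𝟙 (C'.obj v) ⊗ₘ η.app m := by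
    show C'.map (𝟙 v) ⊗ₘ η.app m = _
    rw [hC'.map_id]
  erw [this]
  show (((D.γ v).hom ⊗ₘ 𝟙 (D.G.obj m)) ≫ (D.φ₂ (C.obj v) m).hom) ≫ η.app (C.obj v ⊗ m) =
    (𝟙 (C'.obj v) ⊗ₘ η.app m) ≫ (((D'.γ v).hom ⊗ₘ 𝟙 (D'.G.obj m)) ≫ (D'.φ₂ (C.obj v) m).hom)
  simpa [PsiHom] using key v m


end Stmt13

end ModMonPaper
end
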